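/- arXiv:1704.01535 — 3 statements merged into one kernel-verified Lean document; each statement's English description precedes it below -/
import Mathlib

section
/- For every bandwidth ratio τ > 0 and every ε ∈ (0,1), the optimal type 2 error probability satisfies limsup_{k→∞} (1/k)·log₂ β(k,τ,ε) ≤ −θ(τ). -/
set_option maxHeartbeats 1000000


open Filter Real

noncomputable section

namespace DHT

/-- Real-valued indicator of a proposition. -/
def ind (P : Prop) : ℝ := by classical exact if P then 1 else 0

/-- `p` is a probability mass function on the finite type `α`. -/
def IsPMF {α : Type*} [Fintype α] (p : α → ℝ) : Prop :=
  (∀ a, 0 ≤ p a) ∧ ∑ a, p a = 1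

/-- `f` is a stochastic kernel: every row is a pmf. -/
def IsKernel {α β : Type*} [Fintype β] (f : α → β → ℝ) : Prop :=
  ∀ a, (∀ b, 0 ≤ f a b) ∧ ∑ b, f a b = 1

/-- Pushforward of a pmf along a map. -/
def pushf {α β : Type*} [Fintype α] (p : α → ℝ) (f : α → β) : β → ℝ :=
  fun b => ∑ a, ind (f a = b) * p a

/-- Probability of a set under a pmf. -/
def probIn {α : Type*} [Fintype α] (p : α → ℝ) (A : Set α) : ℝ :=
  ∑ a, ind (a ∈ A) * p a

/-- Shannon entropy, in bits. -/
def entropy {α : Type*} [Fintype α] (p : α → ℝ) : ℝ :=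
  -∑ a, p a * Real.logb 2 (p a)

/-- Kullback–Leibler divergence, in bits. -/
def klDiv {α : Type*} [Fintype α] (p q : α → ℝ) : ℝ :=
  ∑ a, p a * Real.logb 2 (p a / q a)

/-- Conditional entropy `H(α | β)` of a joint pmf on `α × β`, in bits. -/
def condEntropy {α β : Type*} [Fintype α] [Fintype β] (p : α × β → ℝ) : ℝ :=
  -∑ x : α × β, p x * Real.logb 2 (p x / ∑ a, p (a, x.2))

/-- Mutual information `I(α;β)`, in bits. -/
def mutualInfo {α β : Type*} [Fintype α] [Fintype β] (p : α × β → ℝ) : ℝ :=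
  ∑ x : α × β, p x * Real.logb 2 (p x / ((∑ b, p (x.1, b)) * (∑ a, p (a, x.2))))

/-- Conditional mutual information `I(α;β|γ)`, in bits. -/
def condMI {α β γ : Type*} [Fintype α] [Fintype β] [Fintype γ] (p : α × β × γ → ℝ) : ℝ :=
  ∑ x : α × β × γ, p x * Real.logb 2
    (p x * (∑ a, ∑ b, p (a, b, x.2.2)) /
      ((∑ b, p (x.1, b, x.2.2)) * (∑ a, p (a, x.2.1, x.2.2))))

/-- Markov chain `α − β − γ`: the first and third components are conditionally
independent given the middle one. -/
def MarkovChain {α β γ : Type*} [Fintype α] [Fintype γ] (p : α × β × γ → ℝ) : Prop :=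
  ∀ a b c, p (a, b, c) * (∑ a', ∑ c', p (a', b, c')) =
    (∑ c', p (a, b, c')) * (∑ a', p (a', b, c))

/-- Shannon capacity of a discrete memoryless channel, in bits per use. -/
def capacity {X Y : Type*} [Fintype X] [Fintype Y] (Ch : X → Y → ℝ) : ℝ :=
  sSup {c | ∃ q : X → ℝ, IsPMF q ∧ c = mutualInfo (fun xy : X × Y => q xy.1 * Ch xy.1 xy.2)}

/-- Empirical distribution (type) of a length-`j` sequence. -/
def empDist {α : Type*} [Fintype α] {j : ℕ} (w : Fin j → α) : α → ℝ :=
  fun a => (∑ i, ind (w i = a)) / j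

/-- δ-typicality: the empirical distribution is within δ of `p` in every coordinate. -/
def IsTypical {α : Type*} [Fintype α] (p : α → ℝ) (δ : ℝ) {j : ℕ} (w : Fin j → α) : Prop :=
  ∀ a, |empDist w a - p a| ≤ δ

section System

variable {L : ℕ} {U X Y : Fin L → Type} {V Z : Type}
variable [∀ l, Fintype (U l)] [∀ l, Fintype (X l)] [∀ l, Fintype (Y l)]
variable [Fintype V] [Fintype Z]

/-- Joint pmf of the channel outputs `(Y₁ⁿ,…,Y_Lⁿ)`, `V^k` and `Z^k` induced by `k` i.i.d.
copies of the source `R`, the stochastic encoders `f` and the memoryless channels `Ch`. -/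
def inducedDist (R : (((l : Fin L) → U l) × V × Z) → ℝ)
    (Ch : (l : Fin L) → X l → Y l → ℝ) (k n : ℕ)
    (f : (l : Fin L) → (Fin k → U l) → (Fin n → X l) → ℝ) :
    (((l : Fin L) → Fin n → Y l) × (Fin k → V) × (Fin k → Z)) → ℝ :=
  fun yvz =>
    ∑ u : (l : Fin L) → Fin k → U l, ∑ x : (l : Fin L) → Fin n → X l,
      (∏ i : Fin k, R ((fun l => u l i), yvz.2.1 i, yvz.2.2 i)) *
        ((∏ l, f l (u l) (x l)) * ∏ l, ∏ j : Fin n, Ch l (x l j) (yvz.1 l j))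

/-- `P` and `Q` have the same single-variable marginals. -/
def SameMarginals (P Q : (((l : Fin L) → U l) × V × Z) → ℝ) : Prop :=
  (∀ (l : Fin L) (a : U l),
      (∑ x : ((l : Fin L) → U l) × V × Z, ind (x.1 l = a) * P x) =
        ∑ x : ((l : Fin L) → U l) × V × Z, ind (x.1 l = a) * Q x) ∧
  (∀ v : V, (∑ x : ((l : Fin L) → U l) × V × Z, ind (x.2.1 = v) * P x) =
      ∑ x : ((l : Fin L) → U l) × V × Z, ind (x.2.1 = v) * Q x) ∧
  (∀ z : Z, (∑ x : ((l : Fin L) → U l) × V × Z, ind (x.2.2 = z) * P x) =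
      ∑ x : ((l : Fin L) → U l) × V × Z, ind (x.2.2 = z) * Q x)

/-- Testing against conditional independence: `Q = P_{U_𝓛|Z} P_{V|Z} P_Z`. -/
def IsTACI (P Q : (((l : Fin L) → U l) × V × Z) → ℝ) : Prop :=
  ∀ x : ((l : Fin L) → U l) × V × Z,
    Q x = (∑ v : V, P (x.1, v, x.2.2)) * (∑ u : (l : Fin L) → U l, P (u, x.2.1, x.2.2)) /
      (∑ u : (l : Fin L) → U l, ∑ v : V, P (u, v, x.2.2))

/-- Optimal type-2 error probability `β(k,τ,ε)`. -/
def beta (P Q : (((l : Fin L) → U l) × V × Z) → ℝ)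
    (Ch : (l : Fin L) → X l → Y l → ℝ) (τ ε : ℝ) (k : ℕ) : ℝ :=
  sInf {b | ∃ n : ℕ, (n : ℝ) ≤ τ * k ∧
    ∃ f : (l : Fin L) → (Fin k → U l) → (Fin n → X l) → ℝ,
      (∀ l, IsKernel (f l)) ∧
      ∃ A : Set (((l : Fin L) → Fin n → Y l) × (Fin k → V) × (Fin k → Z)),
        probIn (inducedDist P Ch k n f) Aᶜ ≤ ε ∧
        b = probIn (inducedDist Q Ch k n f) A}

/-- `θ(k,τ)`. -/
def thetaK (P Q : (((l : Fin L) → U l) × V × Z) → ℝ)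
    (Ch : (l : Fin L) → X l → Y l → ℝ) (τ : ℝ) (k : ℕ) : ℝ :=
  sSup {d | ∃ n : ℕ, (n : ℝ) ≤ τ * k ∧
    ∃ f : (l : Fin L) → (Fin k → U l) → (Fin n → X l) → ℝ,
      (∀ l, IsKernel (f l)) ∧
      d = klDiv (inducedDist P Ch k n f) (inducedDist Q Ch k n f) / k}

/-- `θ(τ) = sup_{k ≥ 1} θ(k,τ)`. -/
def theta (P Q : (((l : Fin L) → U l) × V × Z) → ℝ)
    (Ch : (l : Fin L) → X l → Y l → ℝ) (τ : ℝ) : ℝ :=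
  sSup {d | ∃ k : ℕ, 1 ≤ k ∧ d = thetaK P Q Ch τ k}

/-- Optimal type-2 error exponent `κ(τ,ε)`. -/
def kappa (P Q : (((l : Fin L) → U l) × V × Z) → ℝ)
    (Ch : (l : Fin L) → X l → Y l → ℝ) (τ ε : ℝ) : ℝ :=
  sSup {κ : ℝ | 0 ≤ κ ∧ ∀ δ : ℝ, 0 < δ →
    Filter.limsup (fun k : ℕ => Real.logb 2 (beta P Q Ch τ ε k) / k) Filter.atTop ≤ -(κ - δ)}

/-- `I(V^k; Y₁ⁿ,…,Y_Lⁿ | Z^k)` of the induced distribution. -/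
def miVY (P : (((l : Fin L) → U l) × V × Z) → ℝ)
    (Ch : (l : Fin L) → X l → Y l → ℝ) (k n : ℕ)
    (f : (l : Fin L) → (Fin k → U l) → (Fin n → X l) → ℝ) : ℝ :=
  condMI (fun x : (Fin k → V) × ((l : Fin L) → Fin n → Y l) × (Fin k → Z) =>
    inducedDist P Ch k n f (x.2.1, x.1, x.2.2))

/-- `H(V^k | Y₁ⁿ,…,Y_Lⁿ, Z^k)` of the induced distribution. -/
def condEntV (P : (((l : Fin L) → U l) × V × Z) → ℝ)
    (Ch : (l : Fin L) → X l → Y l → ℝ) (k n : ℕ)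
    (f : (l : Fin L) → (Fin k → U l) → (Fin n → X l) → ℝ) : ℝ :=
  condEntropy (fun x : (Fin k → V) × (((l : Fin L) → Fin n → Y l) × (Fin k → Z)) =>
    inducedDist P Ch k n f (x.2.1, x.1, x.2.2))

/-- Probability of correct decoding in the `L`-helper JSCC problem. -/
def probCorrect (P : (((l : Fin L) → U l) × V × Z) → ℝ)
    (Ch : (l : Fin L) → X l → Y l → ℝ) (k n m : ℕ)
    (f : (l : Fin L) → (Fin k → U l) → (Fin n → X l) → ℝ)
    (φ : (Fin k → V) → Fin m)
    (g : Fin m × ((l : Fin L) → Fin n → Y l) × (Fin k → Z) → (Fin k → V)) : ℝ :=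
  ∑ w : ((l : Fin L) → Fin n → Y l) × (Fin k → V) × (Fin k → Z),
    ind (g (φ w.2.1, w.1, w.2.2) = w.2.1) * inducedDist P Ch k n f w

/-- Achievability of rate `R` in the `L`-helper JSCC problem with bandwidth ratio `τ`. -/
def JSCCAchievable (P : (((l : Fin L) → U l) × V × Z) → ℝ)
    (Ch : (l : Fin L) → X l → Y l → ℝ) (τ R : ℝ) : Prop :=
  ∀ lam : ℝ, 0 < lam → lam ≤ 1 →
    ∃ (nseq mseq : ℕ → ℕ) (δ : ℕ → ℝ)
      (f : (k : ℕ) → (l : Fin L) → (Fin k → U l) → (Fin (nseq k) → X l) → ℝ)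
      (φ : (k : ℕ) → (Fin k → V) → Fin (mseq k))
      (g : (k : ℕ) → Fin (mseq k) × ((l : Fin L) → Fin (nseq k) → Y l) × (Fin k → Z) →
        (Fin k → V)),
      (∀ k, 0 ≤ δ k) ∧ Filter.Tendsto δ Filter.atTop (nhds 0) ∧
      ∀ k : ℕ, 1 ≤ k →
        (nseq k : ℝ) ≤ τ * k ∧ 1 ≤ mseq k ∧ (∀ l, IsKernel (f k l)) ∧
        1 - lam ≤ probCorrect P Ch k (nseq k) (mseq k) (f k) (φ k) (g k) ∧
        Real.logb 2 (mseq k) / k ≤ R + δ k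

/-- Optimal rate `R(τ)` of the `L`-helper JSCC problem. -/
def Rjscc (P : (((l : Fin L) → U l) × V × Z) → ℝ)
    (Ch : (l : Fin L) → X l → Y l → ℝ) (τ : ℝ) : ℝ :=
  sInf {R | JSCCAchievable P Ch τ R}

/-- `R_k`: infimum of `H(V^k|Y^n,Z^k)/k` over block lengths `n ≤ τk` and encoders. -/
def Rk (P : (((l : Fin L) → U l) × V × Z) → ℝ)
    (Ch : (l : Fin L) → X l → Y l → ℝ) (τ : ℝ) (k : ℕ) : ℝ :=
  sInf {r | ∃ n : ℕ, (n : ℝ) ≤ τ * k ∧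
    ∃ f : (l : Fin L) → (Fin k → U l) → (Fin n → X l) → ℝ,
      (∀ l, IsKernel (f l)) ∧ r = condEntV P Ch k n f / k}

end System

section SingleObserver

variable {Uu Xx Yy V Z : Type}
variable [Fintype Uu] [Fintype Xx] [Fintype Yy] [Fintype V] [Fintype Z]

/-- Single-observer induced joint pmf of `(Yⁿ, V^k, Z^k)`. -/
def inducedDist1 (R : Uu × V × Z → ℝ) (Ch : Xx → Yy → ℝ) (k n : ℕ)
    (f : (Fin k → Uu) → (Fin n → Xx) → ℝ) :
    ((Fin n → Yy) × (Fin k → V) × (Fin k → Z)) → ℝ :=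
  fun yvz => ∑ u : Fin k → Uu, ∑ x : Fin n → Xx,
    (∏ i : Fin k, R (u i, yvz.2.1 i, yvz.2.2 i)) *
      (f u x * ∏ j : Fin n, Ch (x j) (yvz.1 j))

end SingleObserver

section Aux

variable {Uu V Z Wt : Type} [Fintype Uu] [Fintype V] [Fintype Z] [Fintype Wt]

/-- Markov chain `(Z,V) − U − W` for a joint pmf on `(U × V × Z) × W`. -/
def MarkovZVUW (J : (Uu × V × Z) × Wt → ℝ) : Prop :=
  MarkovChain (fun x : (Z × V) × Uu × Wt => J ((x.2.1, x.1.2, x.1.1), x.2.2))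

/-- `I(U;W|Z)` for a joint pmf on `(U × V × Z) × W`. -/
def miUW_Z (J : (Uu × V × Z) × Wt → ℝ) : ℝ :=
  condMI (fun x : Uu × Wt × Z => ∑ v, J ((x.1, v, x.2.2), x.2.1))

/-- `I(V;W|Z)` for a joint pmf on `(U × V × Z) × W`. -/
def miVW_Z (J : (Uu × V × Z) × Wt → ℝ) : ℝ :=
  condMI (fun x : V × Wt × Z => ∑ u, J ((u, x.1, x.2.2), x.2.1))

/-- `I(U;W|V,Z)` for a joint pmf on `(U × V × Z) × W`. -/
def miUW_VZ (J : (Uu × V × Z) × Wt → ℝ) : ℝ :=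
  condMI (fun x : Uu × Wt × (V × Z) => J ((x.1, x.2.2.1, x.2.2.2), x.2.1))

/-- `H(V|W,Z)` for a joint pmf on `(U × V × Z) × W`. -/
def entV_WZ (J : (Uu × V × Z) × Wt → ℝ) : ℝ :=
  condEntropy (fun x : V × (Wt × Z) => ∑ u, J ((u, x.1, x.2.2), x.2.1))

/-- `H(V|Z)` for a joint pmf on `U × V × Z`. -/
def entV_Z (P : Uu × V × Z → ℝ) : ℝ :=
  condEntropy (fun x : V × Z => ∑ u, P (u, x.1, x.2))

end Aux

-- ===================== helpers =====================
section Helpers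
open Finset
variable {α β : Type*} [Fintype α] [Fintype β]

lemma ind_nonneg (P : Prop) : 0 ≤ ind P := by
  unfold ind; split <;> norm_num

lemma ind_le_one (P : Prop) : ind P ≤ 1 := by
  unfold ind; split <;> norm_num

lemma ind_true {P : Prop} (h : P) : ind P = 1 := by
  unfold ind; split <;> tauto

lemma ind_false {P : Prop} (h : ¬ P) : ind P = 0 := by
  unfold ind; split <;> tauto

lemma sum_ind_eq (a : α) (h : α → ℝ) : ∑ t, ind (t = a) * h t = h a := by
  classical
  rw [Finset.sum_eq_single a]
  · simp [ind_true]
  · intro b _ hb; simp [ind_false hb]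
  · intro ha; exact absurd (Finset.mem_univ a) ha

lemma probIn_nonneg {p : α → ℝ} (hp : ∀ a, 0 ≤ p a) (A : Set α) : 0 ≤ probIn p A :=
  Finset.sum_nonneg fun a _ => mul_nonneg (ind_nonneg _) (hp a)

lemma probIn_le_sum {p : α → ℝ} (hp : ∀ a, 0 ≤ p a) (A : Set α) :
    probIn p A ≤ ∑ a, p a := by
  refine Finset.sum_le_sum fun a _ => ?_
  calc ind (a ∈ A) * p a ≤ 1 * p a :=
        mul_le_mul_of_nonneg_right (ind_le_one _) (hp a)
    _ = p a := one_mul _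

lemma probIn_compl {p : α → ℝ} (A : Set α) :
    probIn p Aᶜ = (∑ a, p a) - probIn p A := by
  classical
  unfold probIn
  rw [eq_sub_iff_add_eq, ← Finset.sum_add_distrib]
  refine Finset.sum_congr rfl fun a _ => ?_
  by_cases h : a ∈ A
  · rw [ind_true h, ind_false (by simpa using h)]; ring
  · rw [ind_false h, ind_true (by simpa using h)]; ring

lemma probIn_preimage (p : α → ℝ) (T : α → β) (S : Set β) :
    probIn p (T ⁻¹' S) = probIn (pushf p T) S := by
  classical
  unfold probIn pushf
  simp only [Finset.mul_sum]
  rw [Finset.sum_comm]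
  refine Finset.sum_congr rfl fun a _ => ?_
  rw [Finset.sum_eq_single (T a)]
  · by_cases h : T a ∈ S
    · rw [ind_true h, ind_true (show a ∈ T ⁻¹' S from h), ind_true rfl]; ring
    · rw [ind_false h, ind_false (show a ∉ T ⁻¹' S from h)]; ring
  · intro b _ hb; rw [ind_false (fun h : T a = b => hb h.symm)]; ring
  · intro h; exact absurd (Finset.mem_univ _) h

end Helpers

-- ===================== Stein =====================
section Stein
open Finset
variable {α : Type*} [Fintype α]

lemma sum_pi_prod {ι : Type*} [Fintype ι] [DecidableEq ι] {κ : ι → Type*}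
    [∀ i, Fintype (κ i)] (f : ∀ i, κ i → ℝ) :
    ∑ x : ∀ i, κ i, ∏ i, f i (x i) = ∏ i, ∑ j, f i j :=
  by classical
     rw [Finset.prod_univ_sum (fun _ => Finset.univ) f, Fintype.piFinset_univ]

lemma stein {p q : α → ℝ} (hp : IsPMF p) (hq : IsPMF q)
    (habs : ∀ a, q a = 0 → p a = 0) {ε δ : ℝ} (hε : 0 < ε) (hδ : 0 < δ) :
    ∃ M : ℕ, 1 ≤ M ∧ ∀ m : ℕ, M ≤ m → ∃ A : Set (Fin m → α),
      probIn (fun w => ∏ b, p (w b)) Aᶜ ≤ ε ∧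
      probIn (fun w => ∏ b, q (w b)) A ≤ (2:ℝ) ^ (-((m:ℝ) * (klDiv p q - δ))) := by
  classical
  set D := klDiv p q with hD
  set g : α → ℝ := fun a => Real.logb 2 (p a / q a) - D with hg
  have hsum_pg : ∑ a, p a * g a = 0 := by
    simp only [hg, mul_sub, Finset.sum_sub_distrib, ← Finset.sum_mul, hp.2]
    simp [hD, klDiv]
  set Vr : ℝ := ∑ a, p a * g a ^ 2 with hVr
  have hVr0 : 0 ≤ Vr :=
    Finset.sum_nonneg fun a _ => mul_nonneg (hp.1 a) (sq_nonneg _)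
  refine ⟨⌈Vr / (ε * δ ^ 2)⌉₊ + 1, le_add_self, fun m hm => ?_⟩
  have hm1 : 1 ≤ m := le_trans le_add_self hm
  have hmR : (0:ℝ) < m := by exact_mod_cast hm1
  have hVm : Vr ≤ ε * m * δ ^ 2 := by
    have : (⌈Vr / (ε * δ ^ 2)⌉₊ : ℝ) ≤ m := by exact_mod_cast le_trans (Nat.le_succ _) hm
    have h2 : Vr / (ε * δ ^ 2) ≤ m := le_trans (Nat.le_ceil _) this
    have h3 : 0 < ε * δ ^ 2 := mul_pos hε (by positivity)
    calc Vr = Vr / (ε * δ ^ 2) * (ε * δ ^ 2) := by field_simp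
      _ ≤ m * (ε * δ ^ 2) := mul_le_mul_of_nonneg_right h2 h3.le
      _ = ε * m * δ ^ 2 := by ring
  set t : ℝ := (m : ℝ) * (D - δ) with ht
  set A : Set (Fin m → α) := {w | (2:ℝ) ^ t * ∏ b, q (w b) ≤ ∏ b, p (w b)} with hA
  have mom0p : ∑ w : Fin m → α, ∏ b, p (w b) = 1 := by
    rw [sum_pi_prod (fun _ a => p a)]; simp [hp.2]
  -- second moment
  have key : ∀ b b' : Fin m, (∑ w : Fin m → α, (∏ c, p (w c)) * (g (w b) * g (w b')))
      = if b = b' then Vr else 0 := by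
    intro b b'
    have hpt : ∀ w : Fin m → α, (∏ c, p (w c)) * (g (w b) * g (w b')) =
        ∏ c, (p (w c) * ((if c = b then g (w c) else 1) * (if c = b' then g (w c) else 1))) := by
      intro w
      rw [Finset.prod_mul_distrib, Finset.prod_mul_distrib]
      congr 1
      · congr 1 <;> simp [Finset.prod_ite_eq']
    rw [Finset.sum_congr rfl fun w _ => hpt w,
      sum_pi_prod (fun c a => p a * ((if c = b then g a else 1) * (if c = b' then g a else 1)))]
    by_cases hbb : b = b'
    · subst hbb
      have : ∀ c, (∑ a, p a * ((if c = b then g a else 1) * (if c = b then g a else 1)))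
          = if c = b then Vr else 1 := by
        intro c
        by_cases hc : c = b <;> simp [hc, hVr, sq, hp.2, mul_assoc]
      rw [Finset.prod_congr rfl fun c _ => this c]
      simp [Finset.prod_ite_eq']
    · rw [if_neg hbb]
      refine Finset.prod_eq_zero (Finset.mem_univ b) ?_
      have : ∀ a : α, p a * ((if b = b then g a else 1) * (if b = b' then g a else 1)) =
          p a * g a := by intro a; simp [hbb]
      rw [Finset.sum_congr rfl fun a _ => this a, hsum_pg]
  have mom2 : ∑ w : Fin m → α, (∏ b, p (w b)) * (∑ b, g (w b)) ^ 2 = m * Vr := by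
    have : ∀ w : Fin m → α, (∏ b, p (w b)) * (∑ b, g (w b)) ^ 2 =
        ∑ b, ∑ b', (∏ c, p (w c)) * (g (w b) * g (w b')) := by
      intro w
      rw [sq, Finset.sum_mul_sum]
      rw [Finset.mul_sum]
      exact Finset.sum_congr rfl fun b _ => by rw [Finset.mul_sum]
    rw [Finset.sum_congr rfl fun w _ => this w]
    rw [Finset.sum_comm]
    rw [Finset.sum_congr rfl fun b _ => Finset.sum_comm]
    have : ∀ b : Fin m, ∑ b', (∑ w : Fin m → α, (∏ c, p (w c)) * (g (w b) * g (w b')))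
        = Vr := by
      intro b
      rw [Finset.sum_congr rfl fun b' _ => key b b']
      simp
    rw [Finset.sum_congr rfl fun b _ => this b]
    simp [Finset.sum_const, Finset.card_univ, nsmul_eq_mul]
  refine ⟨A, ?_, ?_⟩
  · -- type 1 error bound
    have hub : ∀ w : Fin m → α, ind (w ∈ Aᶜ) * ∏ b, p (w b) ≤
        (∏ b, p (w b)) * (∑ b, g (w b)) ^ 2 / ((m:ℝ) * δ) ^ 2 := by
      intro w
      have hprodp : 0 ≤ ∏ b, p (w b) := Finset.prod_nonneg fun b _ => hp.1 (w b)
      have hRHS : 0 ≤ (∏ b, p (w b)) * (∑ b, g (w b)) ^ 2 / ((m:ℝ) * δ) ^ 2 :=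
        div_nonneg (mul_nonneg hprodp (sq_nonneg _)) (sq_nonneg _)
      by_cases hw : w ∈ Aᶜ
      swap
      · rw [ind_false hw, zero_mul]; exact hRHS
      by_cases hz : ∃ b, p (w b) = 0
      · obtain ⟨b, hb⟩ := hz
        have h0 : (∏ b, p (w b)) = 0 := Finset.prod_eq_zero (Finset.mem_univ b) hb
        calc ind (w ∈ Aᶜ) * ∏ b, p (w b) = 0 := by rw [h0, mul_zero]
          _ ≤ _ := hRHS
      push_neg at hz
      have hppos : ∀ b, 0 < p (w b) := fun b => lt_of_le_of_ne (hp.1 (w b)) (Ne.symm (hz b))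
      have hqpos : ∀ b, 0 < q (w b) := by
        intro b
        rcases eq_or_lt_of_le (hq.1 (w b)) with h | h
        · exact absurd (habs _ h.symm) (hz b)
        · exact h
      have hdev : ((m:ℝ) * δ) ^ 2 ≤ (∑ b, g (w b)) ^ 2 := by
        by_contra hcon
        push_neg at hcon
        have hmd : (0:ℝ) < (m:ℝ) * δ := mul_pos hmR hδ
        have hS : -((m:ℝ) * δ) < ∑ b, g (w b) := by
          nlinarith [sq_nonneg ((∑ b, g (w b)) + (m:ℝ) * δ)]
        have hsumg : ∑ b, Real.logb 2 (p (w b) / q (w b)) = (∑ b, g (w b)) + m * D := by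
          simp only [hg, Finset.sum_sub_distrib, Finset.sum_const, Finset.card_univ,
            Fintype.card_fin, nsmul_eq_mul]
          ring
        have hsuml : t < ∑ b, Real.logb 2 (p (w b) / q (w b)) := by
          rw [hsumg, ht]; nlinarith
        have hA' : w ∈ A := by
          show (2:ℝ) ^ t * ∏ b, q (w b) ≤ ∏ b, p (w b)
          have hpq : ∏ b, p (w b) =
              (2:ℝ) ^ (∑ b, Real.logb 2 (p (w b) / q (w b))) * ∏ b, q (w b) := by
            rw [Real.rpow_sum_of_pos two_pos, ← Finset.prod_mul_distrib]
            refine Finset.prod_congr rfl fun b _ => ?_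
            rw [Real.rpow_logb two_pos (by norm_num) (div_pos (hppos b) (hqpos b)),
              div_mul_cancel₀ _ (hqpos b).ne']
          rw [hpq]
          exact mul_le_mul_of_nonneg_right
            ((Real.rpow_le_rpow_left_iff one_lt_two).mpr hsuml.le)
            (Finset.prod_nonneg fun b _ => hq.1 (w b))
        exact hw hA'
      rw [ind_true hw, one_mul, le_div_iff₀ (by positivity)]
      exact mul_le_mul_of_nonneg_left hdev hprodp
    have step : probIn (fun w : Fin m → α => ∏ b, p (w b)) Aᶜ ≤
        ∑ w : Fin m → α, (∏ b, p (w b)) * (∑ b, g (w b)) ^ 2 / ((m:ℝ) * δ) ^ 2 :=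
      Finset.sum_le_sum fun w _ => hub w
    calc probIn (fun w : Fin m → α => ∏ b, p (w b)) Aᶜ
        ≤ ∑ w : Fin m → α, (∏ b, p (w b)) * (∑ b, g (w b)) ^ 2 / ((m:ℝ) * δ) ^ 2 := step
      _ = (m * Vr) / ((m:ℝ) * δ) ^ 2 := by rw [← Finset.sum_div, mom2]
      _ ≤ ε := by
          rw [div_le_iff₀ (by positivity)]
          nlinarith
  · -- type 2 error bound
    have h2t : (0:ℝ) < (2:ℝ) ^ t := Real.rpow_pos_of_pos two_pos t
    have h2t' : (0:ℝ) < (2:ℝ) ^ (-t) := Real.rpow_pos_of_pos two_pos _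
    have hub : ∀ w : Fin m → α, ind (w ∈ A) * ∏ b, q (w b) ≤
        (2:ℝ) ^ (-t) * (ind (w ∈ A) * ∏ b, p (w b)) := by
      intro w
      by_cases hw : w ∈ A
      · rw [ind_true hw, one_mul, one_mul]
        have hwA : (2:ℝ) ^ t * ∏ b, q (w b) ≤ ∏ b, p (w b) := hw
        have : (2:ℝ) ^ (-t) = ((2:ℝ) ^ t)⁻¹ := Real.rpow_neg (by norm_num) t
        rw [this]
        calc ∏ b, q (w b) = ((2:ℝ) ^ t)⁻¹ * ((2:ℝ) ^ t * ∏ b, q (w b)) := by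
              field_simp
          _ ≤ ((2:ℝ) ^ t)⁻¹ * ∏ b, p (w b) :=
              mul_le_mul_of_nonneg_left hwA (inv_nonneg.mpr h2t.le)
      · rw [ind_false hw]; simp
    have hend : probIn (fun w : Fin m → α => ∏ b, q (w b)) A ≤ (2:ℝ) ^ (-t) := by
      calc probIn (fun w : Fin m → α => ∏ b, q (w b)) A
          ≤ ∑ w : Fin m → α, (2:ℝ) ^ (-t) * (ind (w ∈ A) * ∏ b, p (w b)) :=
            Finset.sum_le_sum fun w _ => hub w
        _ = (2:ℝ) ^ (-t) * probIn (fun w : Fin m → α => ∏ b, p (w b)) A := by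
            rw [← Finset.mul_sum]; rfl
        _ ≤ (2:ℝ) ^ (-t) * 1 := by
            refine mul_le_mul_of_nonneg_left ?_ h2t'.le
            refine le_trans (probIn_le_sum (fun w => Finset.prod_nonneg
              fun b _ => hp.1 (w b)) A) (le_of_eq mom0p)
        _ = (2:ℝ) ^ (-t) := mul_one _
    exact hend
end Stein

-- ===================== System lemmas =====================

section System

variable {L : ℕ} {U X Y : Fin L → Type} {V Z : Type}
variable [∀ l, Fintype (U l)] [∀ l, Fintype (X l)] [∀ l, Fintype (Y l)]
variable [Fintype V] [Fintype Z]

variable (R : (((l : Fin L) → U l) × V × Z) → ℝ) (Ch : (l : Fin L) → X l → Y l → ℝ)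
variable {k n : ℕ}

/-- reindexing equiv for the i.i.d. source -/
def gammaE (k : ℕ) :
    (((Fin k → V) × (Fin k → Z)) × ((l : Fin L) → Fin k → U l)) ≃
      (Fin k → (((l : Fin L) → U l) × V × Z)) where
  toFun w := fun i => (fun l => w.2 l i, w.1.1 i, w.1.2 i)
  invFun g := ((fun i => (g i).2.1, fun i => (g i).2.2), fun l i => (g i).1 l)
  left_inv w := rfl
  right_inv g := rfl

lemma sum_gamma (hR : IsPMF R) (k : ℕ) :
    ∑ vz : (Fin k → V) × (Fin k → Z), ∑ u : (l : Fin L) → Fin k → U l,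
      ∏ i, R (fun l => u l i, vz.1 i, vz.2 i) = 1 := by
  classical
  have h := Equiv.sum_comp (gammaE (U := U) (V := V) (Z := Z) k)
    (fun g : Fin k → (((l : Fin L) → U l) × V × Z) => ∏ i, R (g i))
  rw [Fintype.sum_prod_type] at h
  calc ∑ vz : (Fin k → V) × (Fin k → Z), ∑ u : (l : Fin L) → Fin k → U l,
        ∏ i, R (fun l => u l i, vz.1 i, vz.2 i)
      = ∑ g : Fin k → (((l : Fin L) → U l) × V × Z), ∏ i, R (g i) := h
    _ = ∏ _i : Fin k, ∑ g, R g := sum_pi_prod (fun _ g => R g)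
    _ = 1 := by simp [hR.2]

lemma pmf_le_one {γ : Type*} [Fintype γ] {p : γ → ℝ} (hp : IsPMF p) (g : γ) : p g ≤ 1 := by
  rw [← hp.2]
  exact Finset.single_le_sum (fun a _ => hp.1 a) (Finset.mem_univ g)

variable (f : (l : Fin L) → (Fin k → U l) → (Fin n → X l) → ℝ)

lemma inducedDist_nonneg (hR : ∀ g, 0 ≤ R g) (hCh : ∀ l, IsKernel (Ch l))
    (hf : ∀ l, IsKernel (f l)) (w) : 0 ≤ inducedDist R Ch k n f w := by
  refine Finset.sum_nonneg fun u _ => Finset.sum_nonneg fun x _ => ?_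
  refine mul_nonneg (Finset.prod_nonneg fun i _ => hR _) (mul_nonneg ?_ ?_)
  · exact Finset.prod_nonneg fun l _ => (hf l (u l)).1 _
  · exact Finset.prod_nonneg fun l _ =>
      Finset.prod_nonneg fun j _ => (hCh l (x l j)).1 _

lemma sum_channel (hCh : ∀ l, IsKernel (Ch l)) (x : (l : Fin L) → Fin n → X l) :
    ∑ y : (l : Fin L) → Fin n → Y l, ∏ l, ∏ j, Ch l (x l j) (y l j) = 1 := by
  classical
  calc ∑ y : (l : Fin L) → Fin n → Y l, ∏ l, ∏ j, Ch l (x l j) (y l j)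
      = ∏ l, ∑ yl : Fin n → Y l, ∏ j, Ch l (x l j) (yl j) :=
        sum_pi_prod (fun l (yl : Fin n → Y l) => ∏ j, Ch l (x l j) (yl j))
    _ = 1 := by
        refine Finset.prod_eq_one fun l _ => ?_
        calc ∑ yl : Fin n → Y l, ∏ j, Ch l (x l j) (yl j)
            = ∏ j, ∑ b, Ch l (x l j) b := sum_pi_prod (fun j (b : Y l) => Ch l (x l j) b)
          _ = 1 := Finset.prod_eq_one fun j _ => (hCh l (x l j)).2

lemma sum_encoder (hf : ∀ l, IsKernel (f l)) (u : (l : Fin L) → Fin k → U l) :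
    ∑ x : (l : Fin L) → Fin n → X l, ∏ l, f l (u l) (x l) = 1 := by
  classical
  calc ∑ x : (l : Fin L) → Fin n → X l, ∏ l, f l (u l) (x l)
      = ∏ l, ∑ xl, f l (u l) xl := sum_pi_prod (fun l (xl : Fin n → X l) => f l (u l) xl)
    _ = 1 := Finset.prod_eq_one fun l _ => (hf l (u l)).2

lemma inducedDist_sum_one (hR : IsPMF R) (hCh : ∀ l, IsKernel (Ch l))
    (hf : ∀ l, IsKernel (f l)) : ∑ w, inducedDist R Ch k n f w = 1 := by
  classical
  simp only [inducedDist]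
  rw [Fintype.sum_prod_type, Finset.sum_comm]
  have h1 : ∀ vz : (Fin k → V) × (Fin k → Z),
      (∑ y : (l : Fin L) → Fin n → Y l, ∑ u : (l : Fin L) → Fin k → U l,
        ∑ x : (l : Fin L) → Fin n → X l,
        (∏ i : Fin k, R ((fun l => u l i), vz.1 i, vz.2 i)) *
          ((∏ l, f l (u l) (x l)) * ∏ l, ∏ j : Fin n, Ch l (x l j) (y l j)))
      = ∑ u : (l : Fin L) → Fin k → U l, ∏ i, R (fun l => u l i, vz.1 i, vz.2 i) := by
    intro vz
    rw [Finset.sum_comm]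
    refine Finset.sum_congr rfl fun u _ => ?_
    rw [Finset.sum_comm]
    have h2 : ∀ x : (l : Fin L) → Fin n → X l,
        (∑ y : (l : Fin L) → Fin n → Y l,
          (∏ i : Fin k, R ((fun l => u l i), vz.1 i, vz.2 i)) *
            ((∏ l, f l (u l) (x l)) * ∏ l, ∏ j : Fin n, Ch l (x l j) (y l j)))
        = (∏ i : Fin k, R ((fun l => u l i), vz.1 i, vz.2 i)) * ∏ l, f l (u l) (x l) := by
      intro x
      rw [← Finset.mul_sum]
      congr 1
      rw [← Finset.mul_sum, sum_channel (Ch := Ch) hCh x, mul_one]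
    rw [Finset.sum_congr rfl fun x _ => h2 x, ← Finset.mul_sum,
      sum_encoder (f := f) hf u, mul_one]
  rw [Finset.sum_congr rfl fun vz _ => h1 vz]
  exact sum_gamma R hR k

lemma inducedDist_mono {P Q : (((l : Fin L) → U l) × V × Z) → ℝ} {c : ℝ} (hc : 0 ≤ c)
    (hP : IsPMF P) (hcQ : ∀ g, c ≤ Q g) (hCh : ∀ l, IsKernel (Ch l))
    (hf : ∀ l, IsKernel (f l)) (w) :
    c ^ k * inducedDist P Ch k n f w ≤ inducedDist Q Ch k n f w := by
  classical
  unfold inducedDist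
  rw [Finset.mul_sum]
  refine Finset.sum_le_sum fun u _ => ?_
  rw [Finset.mul_sum]
  refine Finset.sum_le_sum fun x _ => ?_
  rw [← mul_assoc]
  have hff : 0 ≤ (∏ l, f l (u l) (x l)) * ∏ l, ∏ j : Fin n, Ch l (x l j) (w.1 l j) := by
    refine mul_nonneg (Finset.prod_nonneg fun l _ => (hf l (u l)).1 _) ?_
    exact Finset.prod_nonneg fun l _ => Finset.prod_nonneg fun j _ => (hCh l (x l j)).1 _
  refine mul_le_mul_of_nonneg_right ?_ hff
  have : c ^ k * ∏ i : Fin k, P ((fun l => u l i), w.2.1 i, w.2.2 i) =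
      ∏ i : Fin k, (c * P ((fun l => u l i), w.2.1 i, w.2.2 i)) := by
    rw [Finset.prod_mul_distrib, Finset.prod_const, Finset.card_univ, Fintype.card_fin]
  rw [this]
  refine Finset.prod_le_prod (fun i _ => mul_nonneg hc (hP.1 _)) fun i _ => ?_
  calc c * P ((fun l => u l i), w.2.1 i, w.2.2 i) ≤ c * 1 :=
        mul_le_mul_of_nonneg_left (pmf_le_one hP _) hc
    _ = c := mul_one c
    _ ≤ Q _ := hcQ _

end System

-- ===================== Blocking / simulation =====================

section Block

variable {L : ℕ} {U X Y : Fin L → Type} {V Z : Type}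
variable [∀ l, Fintype (U l)] [∀ l, Fintype (X l)] [∀ l, Fintype (Y l)]
variable [Fintype V] [Fintype Z]
variable {k₀ n₀ m r k n : ℕ}

open Finset

lemma prod_reindex_sum {M : Type*} [CommMonoid M]
    (eK : Fin k ≃ (Fin m × Fin k₀) ⊕ Fin r) (F : Fin k → M) :
    ∏ i', F i' = (∏ b, ∏ i, F (eK.symm (Sum.inl (b, i)))) * ∏ s, F (eK.symm (Sum.inr s)) := by
  rw [← Equiv.prod_comp eK.symm F, Fintype.prod_sum_type, Fintype.prod_prod_type]

lemma prod_reindex_prod {M : Type*} [CommMonoid M]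
    (eN : Fin m × Fin n₀ ≃ Fin n) (F : Fin n → M) :
    ∏ j', F j' = ∏ b, ∏ j, F (eN (b, j)) := by
  rw [← Equiv.prod_comp eN F, Fintype.prod_prod_type]

/-- block product encoder -/
def blockEnc (eK : Fin k ≃ (Fin m × Fin k₀) ⊕ Fin r) (eN : Fin m × Fin n₀ ≃ Fin n)
    (f₀ : (l : Fin L) → (Fin k₀ → U l) → (Fin n₀ → X l) → ℝ) :
    (l : Fin L) → (Fin k → U l) → (Fin n → X l) → ℝ :=
  fun l u x => ∏ b : Fin m,
    f₀ l (fun i => u (eK.symm (Sum.inl (b, i)))) (fun j => x (eN (b, j)))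

/-- split the output/side-information into blocks -/
def blockMap (eK : Fin k ≃ (Fin m × Fin k₀) ⊕ Fin r) (eN : Fin m × Fin n₀ ≃ Fin n) :
    (((l : Fin L) → Fin n → Y l) × (Fin k → V) × (Fin k → Z)) →
      Fin m → (((l : Fin L) → Fin n₀ → Y l) × (Fin k₀ → V) × (Fin k₀ → Z)) :=
  fun w b => (fun l j => w.1 l (eN (b, j)),
    fun i => w.2.1 (eK.symm (Sum.inl (b, i))),
    fun i => w.2.2 (eK.symm (Sum.inl (b, i))))

def curryXE {A : Type*} (eN : Fin m × Fin n₀ ≃ Fin n) :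
    (Fin m → Fin n₀ → A) ≃ (Fin n → A) where
  toFun g := fun j' => g (eN.symm j').1 (eN.symm j').2
  invFun x := fun b j => x (eN (b, j))
  left_inv g := by funext b j; simp
  right_inv x := by funext j'; simp

lemma blockEnc_kernel {f₀ : (l : Fin L) → (Fin k₀ → U l) → (Fin n₀ → X l) → ℝ}
    (eK : Fin k ≃ (Fin m × Fin k₀) ⊕ Fin r) (eN : Fin m × Fin n₀ ≃ Fin n)
    (hf : ∀ l, IsKernel (f₀ l)) (l : Fin L) : IsKernel (blockEnc eK eN f₀ l) := by
  intro u
  refine ⟨fun x => Finset.prod_nonneg fun b _ => (hf l _).1 _, ?_⟩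
  have h := Equiv.sum_comp (curryXE (A := X l) eN)
    (fun x : Fin n → X l => blockEnc eK eN f₀ l u x)
  rw [← h]
  have h2 : ∀ g : Fin m → Fin n₀ → X l, blockEnc eK eN f₀ l u (curryXE eN g)
      = ∏ b, f₀ l (fun i => u (eK.symm (Sum.inl (b, i)))) (g b) := by
    intro g
    unfold blockEnc
    refine Finset.prod_congr rfl fun b _ => ?_
    congr 1
    funext j
    simp [curryXE]
  rw [Finset.sum_congr rfl fun g _ => h2 g,
    sum_pi_prod (fun b (d : Fin n₀ → X l) => f₀ l (fun i => u (eK.symm (Sum.inl (b, i)))) d)]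
  exact Finset.prod_eq_one fun b _ => (hf l _).2

/-- the grand reindexing equivalence -/
def bigE (eK : Fin k ≃ (Fin m × Fin k₀) ⊕ Fin r) (eN : Fin m × Fin n₀ ≃ Fin n) :
    ((Fin m → ((((l : Fin L) → Fin n₀ → Y l) × (Fin k₀ → V) × (Fin k₀ → Z)) ×
        (((l : Fin L) → Fin k₀ → U l) × ((l : Fin L) → Fin n₀ → X l)))) ×
      (Fin r → (((l : Fin L) → U l) × V × Z))) ≃
    ((((l : Fin L) → Fin n → Y l) × (Fin k → V) × (Fin k → Z)) ×
      (((l : Fin L) → Fin k → U l) × ((l : Fin L) → Fin n → X l))) where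
  toFun p :=
    ((fun l j' => (p.1 (eN.symm j').1).1.1 l (eN.symm j').2,
      fun i' => Sum.elim (fun bi : Fin m × Fin k₀ => (p.1 bi.1).1.2.1 bi.2)
        (fun s => (p.2 s).2.1) (eK i'),
      fun i' => Sum.elim (fun bi : Fin m × Fin k₀ => (p.1 bi.1).1.2.2 bi.2)
        (fun s => (p.2 s).2.2) (eK i')),
     (fun l i' => Sum.elim (fun bi : Fin m × Fin k₀ => (p.1 bi.1).2.1 l bi.2)
        (fun s => (p.2 s).1 l) (eK i'),
      fun l j' => (p.1 (eN.symm j').1).2.2 l (eN.symm j').2))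
  invFun ω :=
    (fun b => ((fun l j => ω.1.1 l (eN (b, j)),
        fun i => ω.1.2.1 (eK.symm (Sum.inl (b, i))),
        fun i => ω.1.2.2 (eK.symm (Sum.inl (b, i)))),
       (fun l i => ω.2.1 l (eK.symm (Sum.inl (b, i))),
        fun l j => ω.2.2 l (eN (b, j)))),
     fun s => (fun l => ω.2.1 l (eK.symm (Sum.inr s)),
       ω.1.2.1 (eK.symm (Sum.inr s)), ω.1.2.2 (eK.symm (Sum.inr s))))
  left_inv p := by
    refine Prod.ext (funext fun b => ?_) (funext fun s => ?_)
    · refine Prod.ext (Prod.ext ?_ (Prod.ext ?_ ?_)) (Prod.ext ?_ ?_)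
      · funext l j; simp
      · funext i; simp
      · funext i; simp
      · funext l i; simp
      · funext l j; simp
    · simp
  right_inv ω := by
    refine Prod.ext (Prod.ext ?_ (Prod.ext ?_ ?_)) (Prod.ext ?_ ?_)
    · funext l j'; simp
    · funext i'
      rcases h : eK i' with bi | s
      · simp only [h, Sum.elim_inl, Prod.mk.eta]
        rw [← h, Equiv.symm_apply_apply]
      · simp only [h, Sum.elim_inr]
        rw [← h, Equiv.symm_apply_apply]
    · funext i'
      rcases h : eK i' with bi | s
      · simp only [h, Sum.elim_inl, Prod.mk.eta]
        rw [← h, Equiv.symm_apply_apply]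
      · simp only [h, Sum.elim_inr]
        rw [← h, Equiv.symm_apply_apply]
    · funext l i'
      rcases h : eK i' with bi | s
      · simp only [h, Sum.elim_inl, Prod.mk.eta]
        rw [← h, Equiv.symm_apply_apply]
      · simp only [h, Sum.elim_inr]
        rw [← h, Equiv.symm_apply_apply]
    · funext l j'; simp

variable (R : (((l : Fin L) → U l) × V × Z) → ℝ) (Ch : (l : Fin L) → X l → Y l → ℝ)
variable (f₀ : (l : Fin L) → (Fin k₀ → U l) → (Fin n₀ → X l) → ℝ)

/-- single-block integrand -/
def blockI : ((((l : Fin L) → Fin n₀ → Y l) × (Fin k₀ → V) × (Fin k₀ → Z)) ×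
    (((l : Fin L) → Fin k₀ → U l) × ((l : Fin L) → Fin n₀ → X l))) → ℝ :=
  fun q => (∏ i, R ((fun l => q.2.1 l i), q.1.2.1 i, q.1.2.2 i)) *
    ((∏ l, f₀ l (q.2.1 l) (q.2.2 l)) * ∏ l, ∏ j, Ch l (q.2.2 l j) (q.1.1 l j))

lemma blockMap_bigE (eK : Fin k ≃ (Fin m × Fin k₀) ⊕ Fin r) (eN : Fin m × Fin n₀ ≃ Fin n)
    (β : Fin m → ((((l : Fin L) → Fin n₀ → Y l) × (Fin k₀ → V) × (Fin k₀ → Z)) ×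
        (((l : Fin L) → Fin k₀ → U l) × ((l : Fin L) → Fin n₀ → X l))))
    (ρ : Fin r → (((l : Fin L) → U l) × V × Z)) :
    blockMap (Y := Y) eK eN (bigE eK eN (β, ρ)).1 = fun b => (β b).1 := by
  funext b
  refine Prod.ext ?_ (Prod.ext ?_ ?_)
  · funext l j; simp [blockMap, bigE]
  · funext i; simp [blockMap, bigE]
  · funext i; simp [blockMap, bigE]

/-- full-length integrand -/
def bigI (eK : Fin k ≃ (Fin m × Fin k₀) ⊕ Fin r) (eN : Fin m × Fin n₀ ≃ Fin n) :
    (((((l : Fin L) → Fin n → Y l) × (Fin k → V) × (Fin k → Z)) ×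
      (((l : Fin L) → Fin k → U l) × ((l : Fin L) → Fin n → X l)))) → ℝ :=
  fun ω => (∏ i : Fin k, R ((fun l => ω.2.1 l i), ω.1.2.1 i, ω.1.2.2 i)) *
    ((∏ l, blockEnc eK eN f₀ l (ω.2.1 l) (ω.2.2 l)) *
      ∏ l, ∏ j : Fin n, Ch l (ω.2.2 l j) (ω.1.1 l j))

lemma integrand_block (eK : Fin k ≃ (Fin m × Fin k₀) ⊕ Fin r) (eN : Fin m × Fin n₀ ≃ Fin n)
    (β : Fin m → ((((l : Fin L) → Fin n₀ → Y l) × (Fin k₀ → V) × (Fin k₀ → Z)) ×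
        (((l : Fin L) → Fin k₀ → U l) × ((l : Fin L) → Fin n₀ → X l))))
    (ρ : Fin r → (((l : Fin L) → U l) × V × Z)) :
    bigI R Ch f₀ eK eN (bigE eK eN (β, ρ))
    = (∏ b, blockI R Ch f₀ (β b)) * ∏ s, R (ρ s) := by
  unfold bigI
  have hsrc : (∏ i' : Fin k, R ((fun l => (bigE eK eN (β, ρ)).2.1 l i'),
        (bigE eK eN (β, ρ)).1.2.1 i', (bigE eK eN (β, ρ)).1.2.2 i'))
      = (∏ b, ∏ i, R ((fun l => (β b).2.1 l i), (β b).1.2.1 i, (β b).1.2.2 i)) *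
        ∏ s, R (ρ s) := by
    rw [prod_reindex_sum eK]
    congr 1
    · refine Finset.prod_congr rfl fun b _ => Finset.prod_congr rfl fun i _ => ?_
      simp [bigE]
    · refine Finset.prod_congr rfl fun s _ => ?_
      simp [bigE]
  have henc : (∏ l, blockEnc eK eN f₀ l ((bigE eK eN (β, ρ)).2.1 l) ((bigE eK eN (β, ρ)).2.2 l))
      = ∏ b, ∏ l, f₀ l ((β b).2.1 l) ((β b).2.2 l) := by
    unfold blockEnc
    rw [Finset.prod_comm]
    refine Finset.prod_congr rfl fun b _ => Finset.prod_congr rfl fun l _ => ?_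
    congr 1
    · funext i; simp [bigE]
    · funext j; simp [bigE]
  have hch : (∏ l, ∏ j' : Fin n, Ch l ((bigE eK eN (β, ρ)).2.2 l j') ((bigE eK eN (β, ρ)).1.1 l j'))
      = ∏ b, ∏ l, ∏ j, Ch l ((β b).2.2 l j) ((β b).1.1 l j) := by
    have h1 : ∀ l, (∏ j' : Fin n, Ch l ((bigE eK eN (β, ρ)).2.2 l j') ((bigE eK eN (β, ρ)).1.1 l j'))
        = ∏ b, ∏ j, Ch l ((β b).2.2 l j) ((β b).1.1 l j) := by
      intro l
      rw [prod_reindex_prod eN]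
      refine Finset.prod_congr rfl fun b _ => Finset.prod_congr rfl fun j _ => ?_
      simp [bigE]
    rw [Finset.prod_congr rfl fun l _ => h1 l, Finset.prod_comm]
  rw [hsrc, henc, hch]
  unfold blockI
  simp only [Finset.prod_mul_distrib]
  ring

lemma pushf_block (hR : IsPMF R)
    (eK : Fin k ≃ (Fin m × Fin k₀) ⊕ Fin r) (eN : Fin m × Fin n₀ ≃ Fin n)
    (a : Fin m → (((l : Fin L) → Fin n₀ → Y l) × (Fin k₀ → V) × (Fin k₀ → Z))) :
    pushf (inducedDist R Ch k n (blockEnc eK eN f₀)) (blockMap eK eN) a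
      = ∏ b, inducedDist R Ch k₀ n₀ f₀ (a b) := by
  classical
  unfold pushf
  calc ∑ w : (((l : Fin L) → Fin n → Y l) × (Fin k → V) × (Fin k → Z)),
        ind (blockMap eK eN w = a) * inducedDist R Ch k n (blockEnc eK eN f₀) w
      = ∑ w : (((l : Fin L) → Fin n → Y l) × (Fin k → V) × (Fin k → Z)),
          ∑ ux : (((l : Fin L) → Fin k → U l) × ((l : Fin L) → Fin n → X l)),
            ind (blockMap eK eN w = a) * bigI R Ch f₀ eK eN (w, ux) := by
        refine Finset.sum_congr rfl fun w _ => ?_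
        rw [show inducedDist R Ch k n (blockEnc eK eN f₀) w
            = ∑ ux : (((l : Fin L) → Fin k → U l) × ((l : Fin L) → Fin n → X l)),
              bigI R Ch f₀ eK eN (w, ux) from
          (Fintype.sum_prod_type fun ux => bigI R Ch f₀ eK eN (w, ux)).symm]
        rw [Finset.mul_sum]
    _ = ∑ ω : ((((l : Fin L) → Fin n → Y l) × (Fin k → V) × (Fin k → Z)) ×
          (((l : Fin L) → Fin k → U l) × ((l : Fin L) → Fin n → X l))),
          ind (blockMap eK eN ω.1 = a) * bigI R Ch f₀ eK eN ω :=
        (Fintype.sum_prod_type fun ω => ind (blockMap eK eN ω.1 = a) *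
          bigI R Ch f₀ eK eN ω).symm ▸ rfl
    _ = ∑ p : ((Fin m → ((((l : Fin L) → Fin n₀ → Y l) × (Fin k₀ → V) × (Fin k₀ → Z)) ×
            (((l : Fin L) → Fin k₀ → U l) × ((l : Fin L) → Fin n₀ → X l)))) ×
          (Fin r → (((l : Fin L) → U l) × V × Z))),
          ind (blockMap eK eN (bigE eK eN p).1 = a) * bigI R Ch f₀ eK eN (bigE eK eN p) :=
        (Equiv.sum_comp (bigE eK eN) (fun ω => ind (blockMap eK eN ω.1 = a) *
          bigI R Ch f₀ eK eN ω)).symm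
    _ = ∑ β : Fin m → ((((l : Fin L) → Fin n₀ → Y l) × (Fin k₀ → V) × (Fin k₀ → Z)) ×
            (((l : Fin L) → Fin k₀ → U l) × ((l : Fin L) → Fin n₀ → X l))),
        ∑ ρ : Fin r → (((l : Fin L) → U l) × V × Z),
          ind ((fun b => (β b).1) = a) * ((∏ b, blockI R Ch f₀ (β b)) * ∏ s, R (ρ s)) := by
        rw [Fintype.sum_prod_type fun p => ind (blockMap eK eN (bigE eK eN p).1 = a) *
          bigI R Ch f₀ eK eN (bigE eK eN p)]
        refine Finset.sum_congr rfl fun β _ => Finset.sum_congr rfl fun ρ _ => ?_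
        rw [blockMap_bigE eK eN β ρ, integrand_block R Ch f₀ eK eN β ρ]
    _ = ∑ β : Fin m → ((((l : Fin L) → Fin n₀ → Y l) × (Fin k₀ → V) × (Fin k₀ → Z)) ×
            (((l : Fin L) → Fin k₀ → U l) × ((l : Fin L) → Fin n₀ → X l))),
          ind ((fun b => (β b).1) = a) * ∏ b, blockI R Ch f₀ (β b) := by
        have hrem : ∑ ρ : Fin r → (((l : Fin L) → U l) × V × Z), ∏ s, R (ρ s) = 1 := by
          rw [sum_pi_prod (fun _ (g : (((l : Fin L) → U l) × V × Z)) => R g)]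
          simp [hR.2]
        refine Finset.sum_congr rfl fun β _ => ?_
        rw [← Finset.mul_sum, ← Finset.mul_sum, hrem, mul_one]
    _ = ∑ q : (Fin m → (((l : Fin L) → Fin n₀ → Y l) × (Fin k₀ → V) × (Fin k₀ → Z))) ×
          (Fin m → (((l : Fin L) → Fin k₀ → U l) × ((l : Fin L) → Fin n₀ → X l))),
          ind (q.1 = a) * ∏ b, blockI R Ch f₀ (q.1 b, q.2 b) :=
        Equiv.sum_comp (Equiv.arrowProdEquivProdArrow (Fin m) _ _)
          (fun q => ind (q.1 = a) * ∏ b, blockI R Ch f₀ (q.1 b, q.2 b))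
    _ = ∑ aβ : Fin m → (((l : Fin L) → Fin n₀ → Y l) × (Fin k₀ → V) × (Fin k₀ → Z)),
          ind (aβ = a) * ∑ cd : Fin m → (((l : Fin L) → Fin k₀ → U l) ×
            ((l : Fin L) → Fin n₀ → X l)), ∏ b, blockI R Ch f₀ (aβ b, cd b) := by
        rw [Fintype.sum_prod_type fun q : (Fin m → (((l : Fin L) → Fin n₀ → Y l) ×
            (Fin k₀ → V) × (Fin k₀ → Z))) × (Fin m → (((l : Fin L) → Fin k₀ → U l) ×
            ((l : Fin L) → Fin n₀ → X l))) => ind (q.1 = a) * ∏ b, blockI R Ch f₀ (q.1 b, q.2 b)]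
        refine Finset.sum_congr rfl fun aβ _ => ?_
        show ∑ cd : Fin m → (((l : Fin L) → Fin k₀ → U l) × ((l : Fin L) → Fin n₀ → X l)),
            ind (aβ = a) * ∏ b, blockI R Ch f₀ (aβ b, cd b) = _
        exact (Finset.mul_sum _ _ _).symm
    _ = ∑ cd : Fin m → (((l : Fin L) → Fin k₀ → U l) × ((l : Fin L) → Fin n₀ → X l)),
          ∏ b, blockI R Ch f₀ (a b, cd b) :=
        sum_ind_eq a _
    _ = ∏ b, ∑ cd : (((l : Fin L) → Fin k₀ → U l) × ((l : Fin L) → Fin n₀ → X l)),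
          blockI R Ch f₀ (a b, cd) :=
        sum_pi_prod (fun b (cd : (((l : Fin L) → Fin k₀ → U l) × ((l : Fin L) → Fin n₀ → X l))) =>
          blockI R Ch f₀ (a b, cd))
    _ = ∏ b, inducedDist R Ch k₀ n₀ f₀ (a b) := by
        refine Finset.prod_congr rfl fun b _ => ?_
        rw [Fintype.sum_prod_type fun cd : (((l : Fin L) → Fin k₀ → U l) ×
          ((l : Fin L) → Fin n₀ → X l)) => blockI R Ch f₀ (a b, cd)]
        rfl

end Block

-- ===================== beta / theta =====================

section Assemble

variable {L : ℕ} {U X Y : Fin L → Type} {V Z : Type}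
variable [∀ l, Fintype (U l)] [∀ l, Fintype (X l)] [∀ l, Fintype (Y l)]
variable [Fintype V] [Fintype Z]

variable (P Q : (((l : Fin L) → U l) × V × Z) → ℝ) (Ch : (l : Fin L) → X l → Y l → ℝ)
variable (τ ε : ℝ)

def betaSet (k : ℕ) : Set ℝ :=
  {b | ∃ n : ℕ, (n : ℝ) ≤ τ * k ∧
    ∃ f : (l : Fin L) → (Fin k → U l) → (Fin n → X l) → ℝ,
      (∀ l, IsKernel (f l)) ∧
      ∃ A : Set (((l : Fin L) → Fin n → Y l) × (Fin k → V) × (Fin k → Z)),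
        probIn (inducedDist P Ch k n f) Aᶜ ≤ ε ∧
        b = probIn (inducedDist Q Ch k n f) A}

lemma beta_eq (k : ℕ) : beta P Q Ch τ ε k = sInf (betaSet P Q Ch τ ε k) := rfl

lemma trivKernel (k : ℕ) (l : Fin L) :
    IsKernel (fun (_ : Fin k → U l) (_ : Fin 0 → X l) => (1 : ℝ)) := by
  intro u
  refine ⟨fun _ => zero_le_one, ?_⟩
  rw [Fintype.sum_unique]

lemma probIn_empty {γ : Type*} [Fintype γ] (p : γ → ℝ) : probIn p (∅ : Set γ) = 0 := by
  unfold probIn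
  refine Finset.sum_eq_zero fun a _ => ?_
  rw [ind_false (Set.notMem_empty a), zero_mul]

lemma probIn_univ {γ : Type*} [Fintype γ] (p : γ → ℝ) : probIn p Set.univ = ∑ a, p a := by
  unfold probIn
  exact Finset.sum_congr rfl fun a _ => by rw [ind_true (Set.mem_univ a), one_mul]

lemma betaSet_nonneg (hQ0 : ∀ g, 0 ≤ Q g) (hCh : ∀ l, IsKernel (Ch l)) (k : ℕ) :
    ∀ b ∈ betaSet P Q Ch τ ε k, 0 ≤ b := by
  rintro b ⟨n, hn, f, hf, A, h1, rfl⟩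
  exact probIn_nonneg (inducedDist_nonneg Q Ch f hQ0 hCh hf) _

lemma betaSet_bddBelow (hQ0 : ∀ g, 0 ≤ Q g) (hCh : ∀ l, IsKernel (Ch l)) (k : ℕ) :
    BddBelow (betaSet P Q Ch τ ε k) :=
  ⟨0, fun b hb => betaSet_nonneg P Q Ch τ ε hQ0 hCh k b hb⟩

lemma one_mem_betaSet (hQ : IsPMF Q) (hCh : ∀ l, IsKernel (Ch l)) (hτ : 0 < τ)
    (hε0 : 0 ≤ ε) (k : ℕ) : (1 : ℝ) ∈ betaSet P Q Ch τ ε k := by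
  refine ⟨0, by norm_num; positivity, fun l _ _ => 1, fun l => trivKernel k l, Set.univ, ?_, ?_⟩
  · rw [Set.compl_univ, probIn_empty]; exact hε0
  · rw [probIn_univ, inducedDist_sum_one Q Ch _ hQ hCh (fun l => trivKernel k l)]

lemma betaSet_lower {c : ℝ} (hc0 : 0 ≤ c) (hcQ : ∀ g, c ≤ Q g)
    (hP : IsPMF P) (hCh : ∀ l, IsKernel (Ch l)) (k : ℕ) :
    ∀ b ∈ betaSet P Q Ch τ ε k, c ^ k * (1 - ε) ≤ b := by
  rintro b ⟨n, hn, f, hf, A, h1, rfl⟩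
  have hsum : ∑ w, inducedDist P Ch k n f w = 1 :=
    inducedDist_sum_one P Ch f hP hCh hf
  have h2 : 1 - ε ≤ probIn (inducedDist P Ch k n f) A := by
    have := probIn_compl (p := inducedDist P Ch k n f) A
    rw [hsum] at this
    linarith
  have h3 : c ^ k * probIn (inducedDist P Ch k n f) A ≤
      probIn (inducedDist Q Ch k n f) A := by
    unfold probIn
    rw [Finset.mul_sum]
    refine Finset.sum_le_sum fun a _ => ?_
    calc c ^ k * (ind (a ∈ A) * inducedDist P Ch k n f a)
        = ind (a ∈ A) * (c ^ k * inducedDist P Ch k n f a) := by ring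
      _ ≤ ind (a ∈ A) * inducedDist Q Ch k n f a :=
          mul_le_mul_of_nonneg_left
            (inducedDist_mono Ch f hc0 hP hcQ hCh hf a) (ind_nonneg _)
  calc c ^ k * (1 - ε) ≤ c ^ k * probIn (inducedDist P Ch k n f) A :=
        mul_le_mul_of_nonneg_left h2 (pow_nonneg hc0 k)
    _ ≤ _ := h3

lemma c_exists (hQ : IsPMF Q) (hQpos : ∀ g, 0 < Q g) :
    ∃ c : ℝ, 0 < c ∧ ∀ g, c ≤ Q g := by
  have hne : Nonempty (((l : Fin L) → U l) × V × Z) := by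
    by_contra h
    rw [not_nonempty_iff] at h
    have := hQ.2
    rw [Finset.univ_eq_empty, Finset.sum_empty] at this
    norm_num at this
  haveI := hne
  refine ⟨Finset.univ.inf' Finset.univ_nonempty Q, ?_, fun g => Finset.inf'_le _ (Finset.mem_univ g)⟩
  rw [Finset.lt_inf'_iff]
  exact fun g _ => hQpos g

lemma beta_lower {c : ℝ} (hc0 : 0 ≤ c) (hcQ : ∀ g, c ≤ Q g) (hP : IsPMF P) (hQ : IsPMF Q)
    (hCh : ∀ l, IsKernel (Ch l)) (hτ : 0 < τ) (hε0 : 0 ≤ ε) (k : ℕ) :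
    c ^ k * (1 - ε) ≤ beta P Q Ch τ ε k :=
  le_csInf ⟨1, one_mem_betaSet P Q Ch τ ε hQ hCh hτ hε0 k⟩
    (betaSet_lower P Q Ch τ ε hc0 hcQ hP hCh k)

lemma beta_le_one (hP : IsPMF P) (hQ : IsPMF Q) (hQ0 : ∀ g, 0 ≤ Q g)
    (hCh : ∀ l, IsKernel (Ch l)) (hτ : 0 < τ) (hε0 : 0 ≤ ε) (k : ℕ) :
    beta P Q Ch τ ε k ≤ 1 :=
  csInf_le (betaSet_bddBelow P Q Ch τ ε hQ0 hCh k)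
    (one_mem_betaSet P Q Ch τ ε hQ hCh hτ hε0 k)

lemma beta_nonneg (hQ : IsPMF Q) (hQ0 : ∀ g, 0 ≤ Q g) (hCh : ∀ l, IsKernel (Ch l))
    (hτ : 0 < τ) (hε0 : 0 ≤ ε) (k : ℕ) : 0 ≤ beta P Q Ch τ ε k :=
  le_csInf ⟨1, one_mem_betaSet P Q Ch τ ε hQ hCh hτ hε0 k⟩
    (betaSet_nonneg P Q Ch τ ε hQ0 hCh k)

lemma u_upper (hP : IsPMF P) (hQ : IsPMF Q) (hQ0 : ∀ g, 0 ≤ Q g)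
    (hCh : ∀ l, IsKernel (Ch l)) (hτ : 0 < τ) (hε0 : 0 ≤ ε) (k : ℕ) :
    Real.logb 2 (beta P Q Ch τ ε k) / k ≤ 0 := by
  have h1 : beta P Q Ch τ ε k ≤ 1 := beta_le_one P Q Ch τ ε hP hQ hQ0 hCh hτ hε0 k
  have h0 : 0 ≤ beta P Q Ch τ ε k := beta_nonneg P Q Ch τ ε hQ hQ0 hCh hτ hε0 k
  have hlog : Real.logb 2 (beta P Q Ch τ ε k) ≤ 0 := Real.logb_nonpos one_lt_two h0 h1
  exact div_nonpos_iff.mpr (Or.inr ⟨hlog, Nat.cast_nonneg k⟩)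

lemma u_lower {c : ℝ} (hc0 : 0 < c) (hcQ : ∀ g, c ≤ Q g) (hP : IsPMF P) (hQ : IsPMF Q)
    (hCh : ∀ l, IsKernel (Ch l)) (hτ : 0 < τ) (hε0 : 0 < ε) (hε1 : ε < 1) (k : ℕ)
    (hk : 1 ≤ k) :
    Real.logb 2 c + Real.logb 2 (1 - ε) ≤ Real.logb 2 (beta P Q Ch τ ε k) / k := by
  have hkR : (0 : ℝ) < k := by exact_mod_cast hk
  have h1ε : (0 : ℝ) < 1 - ε := by linarith
  have hlb : c ^ k * (1 - ε) ≤ beta P Q Ch τ ε k :=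
    beta_lower P Q Ch τ ε hc0.le hcQ hP hQ hCh hτ hε0.le k
  have hpos : (0 : ℝ) < c ^ k * (1 - ε) := by positivity
  have hbpos : 0 < beta P Q Ch τ ε k := lt_of_lt_of_le hpos hlb
  have hlog : Real.logb 2 (c ^ k * (1 - ε)) ≤ Real.logb 2 (beta P Q Ch τ ε k) :=
    (Real.logb_le_logb one_lt_two hpos hbpos).mpr hlb
  have hexp : Real.logb 2 (c ^ k * (1 - ε)) =
      k * Real.logb 2 c + Real.logb 2 (1 - ε) := by
    rw [Real.logb_mul (by positivity) (by positivity), Real.logb_pow]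
  have hD : Real.logb 2 (1 - ε) ≤ 0 := Real.logb_nonpos one_lt_two h1ε.le (by linarith)
  have step : Real.logb 2 c + Real.logb 2 (1 - ε) ≤
      (k * Real.logb 2 c + Real.logb 2 (1 - ε)) / k := by
    have hk1R : (1 : ℝ) ≤ k := by exact_mod_cast hk
    rw [le_div_iff₀ hkR]
    nlinarith [mul_nonneg (sub_nonneg.mpr hk1R) (neg_nonneg.mpr hD)]
  calc Real.logb 2 c + Real.logb 2 (1 - ε)
      ≤ (k * Real.logb 2 c + Real.logb 2 (1 - ε)) / k := step
    _ = Real.logb 2 (c ^ k * (1 - ε)) / k := by rw [hexp]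
    _ ≤ _ := by gcongr

lemma core (hP : IsPMF P) (hQ : IsPMF Q) (hQpos : ∀ g, 0 < Q g)
    (hCh : ∀ l, IsKernel (Ch l)) (hτ : 0 < τ) (hε0 : 0 < ε) (hε1 : ε < 1)
    (k₀ n₀ : ℕ) (hk₀ : 1 ≤ k₀) (hn₀ : (n₀ : ℝ) ≤ τ * k₀)
    (f₀ : (l : Fin L) → (Fin k₀ → U l) → (Fin n₀ → X l) → ℝ)
    (hf₀ : ∀ l, IsKernel (f₀ l)) :
    Filter.limsup (fun k : ℕ => Real.logb 2 (beta P Q Ch τ ε k) / k) Filter.atTop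
      ≤ -(klDiv (inducedDist P Ch k₀ n₀ f₀) (inducedDist Q Ch k₀ n₀ f₀) / k₀) := by
  classical
  obtain ⟨c, hc0, hcQ⟩ := c_exists Q hQ hQpos
  have h1ε : (0 : ℝ) < 1 - ε := by linarith
  set p := inducedDist P Ch k₀ n₀ f₀ with hp_def
  set q := inducedDist Q Ch k₀ n₀ f₀ with hq_def
  have hppmf : IsPMF p :=
    ⟨inducedDist_nonneg P Ch f₀ hP.1 hCh hf₀, inducedDist_sum_one P Ch f₀ hP hCh hf₀⟩
  have hqpmf : IsPMF q :=
    ⟨inducedDist_nonneg Q Ch f₀ hQ.1 hCh hf₀, inducedDist_sum_one Q Ch f₀ hQ hCh hf₀⟩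
  have habs : ∀ a, q a = 0 → p a = 0 := by
    intro a ha
    have h1 : c ^ k₀ * p a ≤ q a := inducedDist_mono Ch f₀ hc0.le hP hcQ hCh hf₀ a
    rw [ha] at h1
    have h2 := hppmf.1 a
    nlinarith [pow_pos hc0 k₀]
  set D := klDiv p q with hD_def
  have hk₀R : (0 : ℝ) < k₀ := by exact_mod_cast hk₀
  have hco : Filter.IsCoboundedUnder (· ≤ ·) Filter.atTop
      (fun k : ℕ => Real.logb 2 (beta P Q Ch τ ε k) / k) := by
    refine Filter.isCoboundedUnder_le_of_eventually_le Filter.atTop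
      (x := Real.logb 2 c + Real.logb 2 (1 - ε)) ?_
    filter_upwards [Filter.eventually_ge_atTop 1] with j hj
    exact u_lower P Q Ch τ ε hc0 hcQ hP hQ hCh hτ hε0 hε1 j hj
  have main : ∀ η : ℝ, 0 < η →
      Filter.limsup (fun k : ℕ => Real.logb 2 (beta P Q Ch τ ε k) / k) Filter.atTop
        ≤ -(D / k₀) + η := by
    intro η hη
    set δ := η * k₀ / 2 with hδ_def
    have hδ : 0 < δ := by positivity
    obtain ⟨M, hM1, hst⟩ := stein hppmf hqpmf habs hε0 hδ
    set t := D - δ with ht_def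
    refine Filter.limsup_le_of_le hco ?_
    filter_upwards [Filter.eventually_ge_atTop (max (M * k₀) ⌈2 * |t| / η⌉₊)] with k hk
    have hkM : M * k₀ ≤ k := le_trans (le_max_left _ _) hk
    have hk1 : 1 ≤ k := le_trans (Nat.mul_le_mul hM1 hk₀) hkM
    have hkR : (0 : ℝ) < k := by exact_mod_cast hk1
    set m := k / k₀ with hm_def
    set r := k % k₀ with hr_def
    have hkeq : k = m * k₀ + r := by
      rw [hm_def, hr_def]
      exact (Nat.div_add_mod' k k₀).symm
    have hrk : r < k₀ := by
      rw [hr_def]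
      exact Nat.mod_lt _ (by omega)
    have hmM : M ≤ m := by
      rw [hm_def]
      exact (Nat.le_div_iff_mul_le (by omega)).mpr hkM
    obtain ⟨A, hA1, hA2⟩ := hst m hmM
    have eK : Fin k ≃ (Fin m × Fin k₀) ⊕ Fin r :=
      (finCongr hkeq).trans (finSumFinEquiv.symm.trans
        (Equiv.sumCongr finProdFinEquiv.symm (Equiv.refl (Fin r))))
    have eN : Fin m × Fin n₀ ≃ Fin (m * n₀) := finProdFinEquiv
    have hτn : ((m * n₀ : ℕ) : ℝ) ≤ τ * k := by
      push_cast
      have h1 : (m : ℝ) * n₀ ≤ m * (τ * k₀) :=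
        mul_le_mul_of_nonneg_left hn₀ (Nat.cast_nonneg m)
      have h2 : (m : ℝ) * k₀ ≤ k := by
        have : m * k₀ ≤ k := hkeq ▸ Nat.le_add_right _ r
        exact_mod_cast this
      nlinarith
    have hPpush : ∀ S, probIn (inducedDist P Ch k (m * n₀) (blockEnc eK eN f₀))
        (blockMap eK eN ⁻¹' S) = probIn (fun w => ∏ b, p (w b)) S := by
      intro S
      rw [probIn_preimage]
      unfold probIn
      exact Finset.sum_congr rfl fun a _ => by rw [pushf_block P Ch f₀ hP eK eN a]
    have hQpush : ∀ S, probIn (inducedDist Q Ch k (m * n₀) (blockEnc eK eN f₀))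
        (blockMap eK eN ⁻¹' S) = probIn (fun w => ∏ b, q (w b)) S := by
      intro S
      rw [probIn_preimage]
      unfold probIn
      exact Finset.sum_congr rfl fun a _ => by rw [pushf_block Q Ch f₀ hQ eK eN a]
    have hmem : probIn (inducedDist Q Ch k (m * n₀) (blockEnc eK eN f₀))
        (blockMap eK eN ⁻¹' A) ∈ betaSet P Q Ch τ ε k := by
      refine ⟨m * n₀, hτn, blockEnc eK eN f₀, fun l => blockEnc_kernel eK eN hf₀ l,
        blockMap eK eN ⁻¹' A, ?_, rfl⟩
      rw [← Set.preimage_compl, hPpush]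
      exact hA1
    have hbetale : beta P Q Ch τ ε k ≤ (2 : ℝ) ^ (-((m : ℝ) * t)) := by
      refine le_trans (csInf_le (betaSet_bddBelow P Q Ch τ ε hQ.1 hCh k) hmem) ?_
      rw [hQpush]
      exact hA2
    have hbpos : 0 < beta P Q Ch τ ε k :=
      lt_of_lt_of_le (by positivity)
        (beta_lower P Q Ch τ ε hc0.le hcQ hP hQ hCh hτ hε0.le k)
    have hlogle : Real.logb 2 (beta P Q Ch τ ε k) ≤ -((m : ℝ) * t) := by
      calc Real.logb 2 (beta P Q Ch τ ε k)
          ≤ Real.logb 2 ((2 : ℝ) ^ (-((m : ℝ) * t))) :=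
            (Real.logb_le_logb one_lt_two hbpos (Real.rpow_pos_of_pos two_pos _)).mpr hbetale
        _ = -((m : ℝ) * t) := Real.logb_rpow two_pos (by norm_num)
    have hstep : Real.logb 2 (beta P Q Ch τ ε k) / k ≤ -((m : ℝ) * t) / k := by
      gcongr
    have hcast : (k : ℝ) = m * k₀ + r := by exact_mod_cast hkeq
    have hr0 : (0 : ℝ) ≤ r := Nat.cast_nonneg r
    have hrle : (r : ℝ) ≤ k₀ := by exact_mod_cast hrk.le
    have htabs : 2 * |t| / η ≤ k := by
      refine le_trans (Nat.le_ceil _) ?_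
      exact_mod_cast le_trans (le_max_right (M * k₀) _) hk
    have habs2 : |t| / k ≤ η / 2 := by
      rw [div_le_iff₀ hkR]
      rw [div_le_iff₀ hη] at htabs
      nlinarith
    have hmain : -((m : ℝ) * t) / k ≤ -(t / k₀) + |t| / k := by
      have hcore0 : 0 ≤ |t| * k₀ - t * r := by
        nlinarith [mul_nonneg (sub_nonneg.mpr (le_abs_self t)) hr0,
          mul_nonneg (abs_nonneg t) (sub_nonneg.mpr hrle)]
      have hk0ne : ((k₀ : ℝ)) ≠ 0 := ne_of_gt hk₀R
      have hkne : ((k : ℝ)) ≠ 0 := ne_of_gt hkR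
      have expand : -(t / k₀) + |t| / k + (m : ℝ) * t / k
          = (|t| * k₀ - t * r) / (k₀ * k) := by
        rw [hcast]
        have hwne : ((m : ℝ) * k₀ + r) ≠ 0 := by rw [← hcast]; exact hkne
        rw [← neg_div, div_add_div _ _ hk0ne hwne, div_add_div _ _ (mul_ne_zero hk0ne hwne) hwne,
          div_eq_div_iff (mul_ne_zero (mul_ne_zero hk0ne hwne) hwne) (mul_ne_zero hk0ne hwne)]
        ring
      have h0 : 0 ≤ (|t| * k₀ - t * r) / (k₀ * k) := div_nonneg hcore0 (by positivity)
      rw [← expand] at h0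
      rw [neg_div]
      linarith
    have hδk : -(t / k₀) = -(D / k₀) + η / 2 := by
      rw [ht_def, hδ_def]
      field_simp
      ring
    calc Real.logb 2 (beta P Q Ch τ ε k) / k ≤ -((m : ℝ) * t) / k := hstep
      _ ≤ -(t / k₀) + |t| / k := hmain
      _ ≤ -(D / k₀) + η / 2 + η / 2 := by rw [hδk]; linarith
      _ = -(D / k₀) + η := by ring
  by_contra hcon
  push_neg at hcon
  have h2 := main ((Filter.limsup (fun k : ℕ => Real.logb 2 (beta P Q Ch τ ε k) / k)
    Filter.atTop + D / k₀) / 2) (by linarith)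
  linarith

end Assemble

end DHT

open DHT Filter Real

/-- For every bandwidth ratio `τ > 0` and every `ε ∈ (0,1)`,
`limsup_{k→∞} (1/k)·log₂ β(k,τ,ε) ≤ −θ(τ)`. -/
theorem statement_0 {L : ℕ} {U X Y : Fin L → Type} {V Z : Type}
    [∀ l, Fintype (U l)] [∀ l, Fintype (X l)] [∀ l, Fintype (Y l)]
    [Fintype V] [Fintype Z]
    (P Q : (((l : Fin L) → U l) × V × Z) → ℝ)
    (hP : IsPMF P) (hQ : IsPMF Q) (hmarg : SameMarginals P Q) (hQpos : ∀ x, 0 < Q x)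
    (Ch : (l : Fin L) → X l → Y l → ℝ) (hCh : ∀ l, IsKernel (Ch l))
    (τ : ℝ) (hτ : 0 < τ) (ε : ℝ) (hε0 : 0 < ε) (hε1 : ε < 1) :
    Filter.limsup (fun k : ℕ => Real.logb 2 (beta P Q Ch τ ε k) / k) Filter.atTop ≤
      - theta P Q Ch τ := by
  classical
  obtain ⟨c, hc0, hcQ⟩ := c_exists Q hQ hQpos
  have hco : Filter.IsCoboundedUnder (· ≤ ·) Filter.atTop
      (fun k : ℕ => Real.logb 2 (beta P Q Ch τ ε k) / k) := by
    refine Filter.isCoboundedUnder_le_of_eventually_le Filter.atTop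
      (x := Real.logb 2 c + Real.logb 2 (1 - ε)) ?_
    filter_upwards [Filter.eventually_ge_atTop 1] with j hj
    exact u_lower P Q Ch τ ε hc0 hcQ hP hQ hCh hτ hε0 hε1 j hj
  have hlimsup0 : Filter.limsup (fun k : ℕ => Real.logb 2 (beta P Q Ch τ ε k) / k)
      Filter.atTop ≤ 0 := by
    refine Filter.limsup_le_of_le hco ?_
    filter_upwards with j using u_upper P Q Ch τ ε hP hQ hQ.1 hCh hτ hε0.le j
  unfold theta
  by_cases hbdd : BddAbove {d | ∃ k : ℕ, 1 ≤ k ∧ d = thetaK P Q Ch τ k}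
  · rw [le_neg]
    refine csSup_le ⟨thetaK P Q Ch τ 1, 1, le_refl 1, rfl⟩ ?_
    rintro d ⟨k₀, hk₀, rfl⟩
    unfold thetaK
    by_cases hbdd' : BddAbove {d | ∃ n : ℕ, (n : ℝ) ≤ τ * k₀ ∧
      ∃ f : (l : Fin L) → (Fin k₀ → U l) → (Fin n → X l) → ℝ,
        (∀ l, IsKernel (f l)) ∧
        d = klDiv (inducedDist P Ch k₀ n f) (inducedDist Q Ch k₀ n f) / k₀}
    · refine csSup_le ⟨_, 0, by norm_num; positivity, fun l _ _ => 1,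
        fun l => trivKernel k₀ l, rfl⟩ ?_
      rintro d' ⟨n₀, hn₀, f₀, hf₀, rfl⟩
      have hcore := core P Q Ch τ ε hP hQ hQpos hCh hτ hε0 hε1 k₀ n₀ hk₀ hn₀ f₀ hf₀
      linarith
    · rw [Real.sSup_of_not_bddAbove hbdd']
      linarith
  · rw [Real.sSup_of_not_bddAbove hbdd]
    simpa using hlimsup0
end
end

section
/- For every bandwidth ratio τ > 0, lim_{ε→0} liminf_{k→∞} (1/k)·log₂ β(k,τ,ε) ≥ −θ(τ). -/
open Filter Real

noncomputable section

namespace DHT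

namespace Aux

lemma ind_nonneg (P : Prop) : 0 ≤ ind P := by
  unfold ind; split <;> norm_num

lemma ind_true {P : Prop} (h : P) : ind P = 1 := by unfold ind; simp [h]

lemma ind_false {P : Prop} (h : ¬ P) : ind P = 0 := by unfold ind; simp [h]

lemma probIn_nonneg {α : Type*} [Fintype α] {p : α → ℝ} (hp : ∀ a, 0 ≤ p a) (A : Set α) :
    0 ≤ probIn p A :=
  Finset.sum_nonneg fun a _ => mul_nonneg (ind_nonneg _) (hp a)

lemma probIn_eq_sum_filter {α : Type*} [Fintype α] (p : α → ℝ) (A : Set α)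
    [DecidablePred (· ∈ A)] :
    probIn p A = ∑ i ∈ Finset.univ.filter (· ∈ A), p i := by
  unfold probIn ind
  rw [Finset.sum_filter]
  refine Finset.sum_congr rfl fun a _ => ?_
  by_cases h : a ∈ A <;> simp [h]

lemma probIn_compl_eq_sum_filter {α : Type*} [Fintype α] (p : α → ℝ) (A : Set α)
    [DecidablePred (· ∈ A)] :
    probIn p Aᶜ = ∑ i ∈ Finset.univ.filter (fun a => ¬ (a ∈ A)), p i := by
  unfold probIn ind
  rw [Finset.sum_filter]
  refine Finset.sum_congr rfl fun a _ => ?_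
  by_cases h : a ∈ A <;> simp [Set.mem_compl_iff, h]

lemma probIn_empty {α : Type*} [Fintype α] (p : α → ℝ) :
    probIn p (∅ : Set α) = 0 := by
  unfold probIn ind
  simp

lemma probIn_univ {α : Type*} [Fintype α] (p : α → ℝ) :
    probIn p Set.univ = ∑ a, p a := by
  unfold probIn ind
  simp

/-- `x - 1 ≤ x * log x` for `x > 0`. -/
lemma sub_one_le_mul_log {x : ℝ} (hx : 0 < x) : x - 1 ≤ x * Real.log x := by
  have h := Real.log_le_sub_one_of_pos (x := x⁻¹) (by positivity)
  rw [Real.log_inv] at h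
  have h2 := mul_le_mul_of_nonneg_left h hx.le
  have h3 : x * x⁻¹ = 1 := mul_inv_cancel₀ hx.ne'
  nlinarith

/-- Log-sum inequality, natural log. -/
lemma log_sum_ineq {ι : Type*} (s : Finset ι) (a b : ι → ℝ)
    (ha : ∀ i ∈ s, 0 ≤ a i) (hb : ∀ i ∈ s, 0 ≤ b i)
    (hab : ∀ i ∈ s, b i = 0 → a i = 0) :
    (∑ i ∈ s, a i) * Real.log ((∑ i ∈ s, a i) / (∑ i ∈ s, b i)) ≤
      ∑ i ∈ s, a i * Real.log (a i / b i) := by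
  set A := ∑ i ∈ s, a i with hA
  set B := ∑ i ∈ s, b i with hB
  by_cases hA0 : A = 0
  · have hz : ∀ i ∈ s, a i = 0 :=
      (Finset.sum_eq_zero_iff_of_nonneg ha).1 (by rw [← hA]; exact hA0)
    rw [hA0, zero_mul]
    rw [Finset.sum_congr rfl (fun i hi => by rw [hz i hi, zero_mul])]
    simp
  · have hApos : 0 < A := lt_of_le_of_ne (Finset.sum_nonneg ha) (Ne.symm hA0)
    have hBpos : 0 < B := by
      rcases lt_or_eq_of_le (Finset.sum_nonneg hb) with h | h
      · exact h
      · exfalso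
        have hzb : ∀ i ∈ s, b i = 0 :=
          (Finset.sum_eq_zero_iff_of_nonneg hb).1 (by rw [← hB]; exact h.symm)
        have hza : ∀ i ∈ s, a i = 0 := fun i hi => hab i hi (hzb i hi)
        exact hA0 (Finset.sum_eq_zero hza)
    have key : ∀ i ∈ s, a i - b i * (A / B) ≤ a i * (Real.log (a i / b i) - Real.log (A / B)) := by
      intro i hi
      rcases eq_or_lt_of_le (ha i hi) with h0 | h0
      · rw [← h0]
        have : 0 ≤ b i * (A / B) :=
          mul_nonneg (hb i hi) (le_of_lt (div_pos hApos hBpos))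
        simpa using by linarith
      · have hbi : 0 < b i := by
          rcases eq_or_lt_of_le (hb i hi) with hb0 | hb0
          · exact absurd (hab i hi hb0.symm) (ne_of_gt h0)
          · exact hb0
        have hx : 0 < b i * A / (a i * B) :=
          div_pos (mul_pos hbi hApos) (mul_pos h0 hBpos)
        have h2 : Real.log (b i * A / (a i * B)) ≤ b i * A / (a i * B) - 1 :=
          Real.log_le_sub_one_of_pos hx
        have hlog : Real.log (a i / b i) - Real.log (A / B) = -Real.log (b i * A / (a i * B)) := by
          rw [Real.log_div (ne_of_gt h0) (ne_of_gt hbi), Real.log_div (ne_of_gt hApos) (ne_of_gt hBpos),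
            Real.log_div (by positivity) (by positivity), Real.log_mul (ne_of_gt hbi) (ne_of_gt hApos),
            Real.log_mul (ne_of_gt h0) (ne_of_gt hBpos)]
          ring
        rw [hlog]
        have hmul := mul_le_mul_of_nonneg_left h2 h0.le
        have hcancel : a i * (b i * A / (a i * B)) = b i * (A / B) := by
          field_simp
        nlinarith
    have hsum := Finset.sum_le_sum key
    have hL : ∑ i ∈ s, (a i - b i * (A / B)) = 0 := by
      rw [Finset.sum_sub_distrib, ← Finset.sum_mul, ← hB]
      rw [mul_div_assoc', mul_comm, mul_div_assoc, div_self (ne_of_gt hBpos)]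
      simp [hA]
    have hR : ∑ i ∈ s, a i * (Real.log (a i / b i) - Real.log (A / B)) =
        (∑ i ∈ s, a i * Real.log (a i / b i)) - A * Real.log (A / B) := by
      rw [Finset.sum_congr rfl (fun i _ => mul_sub (a i) _ _), Finset.sum_sub_distrib,
        ← Finset.sum_mul]
    rw [hL] at hsum
    rw [hR] at hsum
    linarith

/-- Log-sum inequality, base 2. -/
lemma logb_sum_ineq {ι : Type*} (s : Finset ι) (a b : ι → ℝ)
    (ha : ∀ i ∈ s, 0 ≤ a i) (hb : ∀ i ∈ s, 0 ≤ b i)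
    (hab : ∀ i ∈ s, b i = 0 → a i = 0) :
    (∑ i ∈ s, a i) * Real.logb 2 ((∑ i ∈ s, a i) / (∑ i ∈ s, b i)) ≤
      ∑ i ∈ s, a i * Real.logb 2 (a i / b i) := by
  have h := log_sum_ineq s a b ha hb hab
  have hl2 : (0:ℝ) < Real.log 2 := Real.log_pos one_lt_two
  simp only [Real.logb, ← mul_div_assoc]
  rw [← Finset.sum_div]
  gcongr

/-- `-(1/log 2) ≤ x * logb 2 x` for `0 < x ≤ 1`. -/
lemma neg_le_mul_logb {x : ℝ} (hx0 : 0 < x) (hx1 : x ≤ 1) :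
    -(1 / Real.log 2) ≤ x * Real.logb 2 x := by
  have h := sub_one_le_mul_log hx0
  have hl2 : (0:ℝ) < Real.log 2 := Real.log_pos one_lt_two
  have h1 : (-1 : ℝ) ≤ x * Real.log x := by linarith
  have : (-1 : ℝ) / Real.log 2 ≤ x * Real.log x / Real.log 2 := by gcongr
  calc -(1 / Real.log 2) = (-1 : ℝ) / Real.log 2 := by ring
    _ ≤ x * Real.log x / Real.log 2 := this
    _ = x * Real.logb 2 x := by rw [Real.logb]; ring

/-- Binary-divergence style numeric bound. -/
lemma binary_bound {a a' b b' D ε : ℝ}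
    (hsp : a + a' = 1) (hsq : b + b' = 1)
    (ha'0 : 0 ≤ a') (h1 : a' ≤ ε) (hε1 : ε < 1)
    (hbpos : 0 < b) (hb'0 : 0 ≤ b')
    (himp : b' = 0 → a' = 0)
    (hD : a * Real.logb 2 (a / b) + a' * Real.logb 2 (a' / b') ≤ D) :
    -(D + 3) / (1 - ε) ≤ Real.logb 2 b := by
  have hεpos : 0 < 1 - ε := by linarith
  have hapos : 0 < a := by linarith
  have ha1 : a ≤ 1 := by linarith
  have hb1 : b ≤ 1 := by linarith
  have haε : 1 - ε ≤ a := by linarith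
  have hl2 : (0:ℝ) < Real.log 2 := Real.log_pos one_lt_two
  have hinvpos : (0:ℝ) ≤ 1 / Real.log 2 := le_of_lt (div_pos one_pos hl2)
  have hterm1 : a * Real.logb 2 a - a * Real.logb 2 b ≤ a * Real.logb 2 (a / b) := by
    rw [Real.logb_div (ne_of_gt hapos) (ne_of_gt hbpos), mul_sub]
  have he1 : -(1 / Real.log 2) ≤ a * Real.logb 2 a := neg_le_mul_logb hapos ha1
  have hterm2 : -(1 / Real.log 2) ≤ a' * Real.logb 2 (a' / b') := by
    rcases eq_or_lt_of_le ha'0 with h0 | h0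
    · rw [← h0, zero_mul]; linarith
    · have hb'pos : 0 < b' := by
        rcases lt_or_eq_of_le hb'0 with h | h
        · exact h
        · exact absurd (himp h.symm) (ne_of_gt h0)
      have hb'1 : b' ≤ 1 := by linarith
      have ha'1 : a' ≤ 1 := by linarith
      have hlb' : Real.logb 2 b' ≤ 0 := Real.logb_nonpos one_lt_two hb'0 hb'1
      rw [Real.logb_div (ne_of_gt h0) (ne_of_gt hb'pos), mul_sub]
      have h2 : 0 ≤ -(a' * Real.logb 2 b') :=
        neg_nonneg.mpr (mul_nonpos_of_nonneg_of_nonpos ha'0 hlb')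
      have h3 := neg_le_mul_logb h0 ha'1
      linarith
  have hlb : Real.logb 2 b ≤ 0 := Real.logb_nonpos one_lt_two hbpos.le hb1
  have hma : -((1 - ε) * Real.logb 2 b) ≤ -(a * Real.logb 2 b) := by
    have := mul_le_mul_of_nonneg_right haε (neg_nonneg.mpr hlb)
    nlinarith
  have hinv : 1 / Real.log 2 ≤ 1.5 := by
    have h9 : (0.6931471803 : ℝ) < Real.log 2 := Real.log_two_gt_d9
    rw [div_le_iff₀ hl2]
    nlinarith
  have hchain : -((1 - ε) * Real.logb 2 b) - 3 ≤ D := by linarith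
  rw [div_le_iff₀ hεpos]
  nlinarith
  
/-- Core bound: for pmfs `p ≪ q` and a set `A` with `p(Aᶜ) ≤ ε < 1`,
`q(A)` is positive and `logb 2 (q A) ≥ -(klDiv p q + 3)/(1-ε)`. -/
lemma main_bound {α : Type*} [Fintype α] {p q : α → ℝ}
    (hp0 : ∀ x, 0 ≤ p x) (hp1 : ∑ x, p x = 1)
    (hq0 : ∀ x, 0 ≤ q x) (hq1 : ∑ x, q x = 1)
    (habs : ∀ x, q x = 0 → p x = 0)
    (A : Set α) {ε : ℝ} (hε1 : ε < 1) (h1 : probIn p Aᶜ ≤ ε) :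
    0 < probIn q A ∧ -(klDiv p q + 3) / (1 - ε) ≤ Real.logb 2 (probIn q A) := by
  classical
  have hsa : probIn p A = ∑ i ∈ Finset.univ.filter (· ∈ A), p i := probIn_eq_sum_filter p A
  have hta : probIn p Aᶜ = ∑ i ∈ Finset.univ.filter (fun a => ¬ (a ∈ A)), p i :=
    probIn_compl_eq_sum_filter p A
  have hsb : probIn q A = ∑ i ∈ Finset.univ.filter (· ∈ A), q i := probIn_eq_sum_filter q A
  have htb : probIn q Aᶜ = ∑ i ∈ Finset.univ.filter (fun a => ¬ (a ∈ A)), q i :=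
    probIn_compl_eq_sum_filter q A
  have hsp : probIn p A + probIn p Aᶜ = 1 := by
    rw [hsa, hta, Finset.sum_filter_add_sum_filter_not, hp1]
  have hsq : probIn q A + probIn q Aᶜ = 1 := by
    rw [hsb, htb, Finset.sum_filter_add_sum_filter_not, hq1]
  have ha'0 : 0 ≤ probIn p Aᶜ := probIn_nonneg hp0 _
  have hb'0 : 0 ≤ probIn q Aᶜ := probIn_nonneg hq0 _
  have hb0 : 0 ≤ probIn q A := probIn_nonneg hq0 _
  have hbpos : 0 < probIn q A := by
    rcases lt_or_eq_of_le hb0 with h | h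
    · exact h
    · exfalso
      have hzb : ∀ i ∈ Finset.univ.filter (· ∈ A), q i = 0 :=
        (Finset.sum_eq_zero_iff_of_nonneg (fun i _ => hq0 i)).1 (by rw [← hsb, ← h])
      have : probIn p A = 0 := by
        rw [hsa]; exact Finset.sum_eq_zero fun i hi => habs i (hzb i hi)
      linarith
  have himp : probIn q Aᶜ = 0 → probIn p Aᶜ = 0 := by
    intro h
    have hzb : ∀ i ∈ Finset.univ.filter (fun a => ¬ (a ∈ A)), q i = 0 :=
      (Finset.sum_eq_zero_iff_of_nonneg (fun i _ => hq0 i)).1 (by rw [← htb, h])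
    rw [hta]; exact Finset.sum_eq_zero fun i hi => habs i (hzb i hi)
  have hsplit : klDiv p q = (∑ i ∈ Finset.univ.filter (· ∈ A), p i * Real.logb 2 (p i / q i)) +
      ∑ i ∈ Finset.univ.filter (fun a => ¬ (a ∈ A)), p i * Real.logb 2 (p i / q i) := by
    rw [klDiv, Finset.sum_filter_add_sum_filter_not]
  have hls1 := logb_sum_ineq (Finset.univ.filter (· ∈ A)) p q (fun i _ => hp0 i)
    (fun i _ => hq0 i) (fun i _ h => habs i h)
  have hls2 := logb_sum_ineq (Finset.univ.filter (fun a => ¬ (a ∈ A))) p q (fun i _ => hp0 i)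
    (fun i _ => hq0 i) (fun i _ h => habs i h)
  rw [← hsa, ← hsb] at hls1
  rw [← hta, ← htb] at hls2
  have hD : probIn p A * Real.logb 2 (probIn p A / probIn q A) +
      probIn p Aᶜ * Real.logb 2 (probIn p Aᶜ / probIn q Aᶜ) ≤ klDiv p q := by
    rw [hsplit]; exact add_le_add hls1 hls2
  exact ⟨hbpos, binary_bound hsp hsq ha'0 h1 hε1 hbpos hb'0 himp hD⟩

lemma sum_fn_prod {ι : Type*} [Fintype ι] [DecidableEq ι] {κ : ι → Type*} [∀ i, Fintype (κ i)]
    (h : ∀ i, κ i → ℝ) :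
    ∑ g : ∀ i, κ i, ∏ i, h i (g i) = ∏ i, ∑ b, h i b := (Fintype.prod_sum h).symm

lemma sum_triple {W A B : Type*} [Fintype W] [Fintype A] [Fintype B] (F : W → A → B → ℝ) :
    ∑ w, ∑ a, ∑ b, F w a b = ∑ a, ∑ b, ∑ w, F w a b := by
  rw [Finset.sum_comm]
  exact Finset.sum_congr rfl fun a _ => Finset.sum_comm

lemma sum_split {Yt Vt Zt : Type*} [Fintype Yt] [Fintype Vt] [Fintype Zt]
    (G1 : Vt → Zt → ℝ) (c : ℝ) (G3 : Yt → ℝ) :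
    ∑ w : Yt × Vt × Zt, G1 w.2.1 w.2.2 * (c * G3 w.1) =
      (∑ v, ∑ z, G1 v z) * (c * ∑ y, G3 y) := by
  rw [Fintype.sum_prod_type]
  have h1 : ∀ y : Yt, ∑ p : Vt × Zt, G1 p.1 p.2 * (c * G3 y) =
      (∑ v, ∑ z, G1 v z) * (c * G3 y) := by
    intro y
    rw [Fintype.sum_prod_type]
    simp only [← Finset.sum_mul]
  rw [Finset.sum_congr rfl fun y _ => h1 y, ← Finset.mul_sum, ← Finset.mul_sum]

section Induced

variable {L : ℕ} {U X Y : Fin L → Type} {V Z : Type}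
variable [∀ l, Fintype (U l)] [∀ l, Fintype (X l)] [∀ l, Fintype (Y l)]
variable [Fintype V] [Fintype Z]

lemma inducedDist_nonneg {R : (((l : Fin L) → U l) × V × Z) → ℝ}
    {Ch : (l : Fin L) → X l → Y l → ℝ} {k n : ℕ}
    {f : (l : Fin L) → (Fin k → U l) → (Fin n → X l) → ℝ}
    (hR : ∀ s, 0 ≤ R s) (hCh : ∀ l, IsKernel (Ch l)) (hf : ∀ l, IsKernel (f l))
    (w : ((l : Fin L) → Fin n → Y l) × (Fin k → V) × (Fin k → Z)) :
    0 ≤ inducedDist R Ch k n f w := by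
  unfold inducedDist
  refine Finset.sum_nonneg fun u _ => Finset.sum_nonneg fun x _ => mul_nonneg ?_ (mul_nonneg ?_ ?_)
  · exact Finset.prod_nonneg fun i _ => hR _
  · exact Finset.prod_nonneg fun l _ => (hf l (u l)).1 _
  · exact Finset.prod_nonneg fun l _ => Finset.prod_nonneg fun j _ => (hCh l (x l j)).1 _

lemma sum_inducedDist {R : (((l : Fin L) → U l) × V × Z) → ℝ}
    {Ch : (l : Fin L) → X l → Y l → ℝ} {k n : ℕ}
    {f : (l : Fin L) → (Fin k → U l) → (Fin n → X l) → ℝ}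
    (hR : IsPMF R) (hCh : ∀ l, IsKernel (Ch l)) (hf : ∀ l, IsKernel (f l)) :
    ∑ w, inducedDist R Ch k n f w = 1 := by
  classical
  unfold inducedDist
  rw [sum_triple]
  have hCh3 : ∀ x : (l : Fin L) → Fin n → X l,
      ∑ y : (l : Fin L) → Fin n → Y l, ∏ l, ∏ j : Fin n, Ch l (x l j) (y l j) = 1 := by
    intro x
    rw [sum_fn_prod (κ := fun l => Fin n → Y l) (fun l yl => ∏ j : Fin n, Ch l (x l j) (yl j))]
    rw [Finset.prod_congr rfl fun l _ => sum_fn_prod (κ := fun _ : Fin n => Y l) (fun (j : Fin n) (b : Y l) => Ch l (x l j) b)]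
    rw [Finset.prod_congr rfl fun l _ =>
      Finset.prod_congr rfl fun j _ => (hCh l (x l j)).2]
    simp
  have hFsum : ∀ u : (l : Fin L) → Fin k → U l, ∑ x : (l : Fin L) → Fin n → X l, ∏ l, f l (u l) (x l) = 1 := by
    intro u
    rw [sum_fn_prod (κ := fun l => Fin n → X l) (fun l xl => f l (u l) xl)]
    rw [Finset.prod_congr rfl fun l _ => (hf l (u l)).2]
    simp
  have hRsum : ∀ u : (l : Fin L) → Fin k → U l,
      ∑ v : Fin k → V, ∑ z : Fin k → Z, ∏ i : Fin k, R ((fun l => u l i), v i, z i) =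
        ∏ i : Fin k, ∑ a : V, ∑ b : Z, R ((fun l => u l i), a, b) := by
    intro u
    rw [Finset.sum_congr rfl fun v _ =>
      sum_fn_prod (κ := fun _ : Fin k => Z) (fun (i : Fin k) (b : Z) => R ((fun l => u l i), v i, b))]
    exact sum_fn_prod (κ := fun _ : Fin k => V) (fun (i : Fin k) (a : V) => (∑ b : Z, R ((fun l => u l i), a, b)))
  have step : ∀ u : (l : Fin L) → Fin k → U l, ∀ x : (l : Fin L) → Fin n → X l,
      ∑ w : ((l : Fin L) → Fin n → Y l) × (Fin k → V) × (Fin k → Z),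
        (∏ i : Fin k, R ((fun l => u l i), w.2.1 i, w.2.2 i)) *
          ((∏ l, f l (u l) (x l)) * ∏ l, ∏ j : Fin n, Ch l (x l j) (w.1 l j)) =
      (∏ i : Fin k, ∑ a : V, ∑ b : Z, R ((fun l => u l i), a, b)) *
        ((∏ l, f l (u l) (x l)) * 1) := by
    intro u x
    have h := sum_split (fun (v : Fin k → V) (z : Fin k → Z) => ∏ i : Fin k, R ((fun l => u l i), v i, z i))
      (∏ l, f l (u l) (x l)) (fun (y : (l : Fin L) → Fin n → Y l) => ∏ l, ∏ j : Fin n, Ch l (x l j) (y l j))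
    calc ∑ w : ((l : Fin L) → Fin n → Y l) × (Fin k → V) × (Fin k → Z),
        (∏ i : Fin k, R ((fun l => u l i), w.2.1 i, w.2.2 i)) *
          ((∏ l, f l (u l) (x l)) * ∏ l, ∏ j : Fin n, Ch l (x l j) (w.1 l j))
        = (∑ v : Fin k → V, ∑ z : Fin k → Z, ∏ i : Fin k, R ((fun l => u l i), v i, z i)) *
          ((∏ l, f l (u l) (x l)) *
            ∑ y : (l : Fin L) → Fin n → Y l, ∏ l, ∏ j : Fin n, Ch l (x l j) (y l j)) := h
      _ = (∏ i : Fin k, ∑ a : V, ∑ b : Z, R ((fun l => u l i), a, b)) *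
          ((∏ l, f l (u l) (x l)) * 1) := by rw [hRsum u, hCh3 x]
  rw [Finset.sum_congr rfl fun u _ => Finset.sum_congr rfl fun x _ => step u x]
  simp only [mul_one]
  rw [Finset.sum_congr rfl fun u _ => (Finset.mul_sum _ _ _).symm]
  rw [Finset.sum_congr rfl fun u (_ : u ∈ Finset.univ) => by rw [hFsum u, mul_one]]
  have hone : ∑ t : (l : Fin L) → U l, ∑ a : V, ∑ b : Z, R (t, a, b) = 1 := by
    have h2 := hR.2
    rw [Fintype.sum_prod_type] at h2
    calc ∑ t : (l : Fin L) → U l, ∑ a : V, ∑ b : Z, R (t, a, b)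
        = ∑ t : (l : Fin L) → U l, ∑ p : V × Z, R (t, p) :=
          Finset.sum_congr rfl fun t _ =>
            (Fintype.sum_prod_type (f := fun p : V × Z => R (t, p))).symm
      _ = 1 := h2
  calc ∑ u : (l : Fin L) → Fin k → U l, ∏ i : Fin k, ∑ a : V, ∑ b : Z, R ((fun l => u l i), a, b)
      = ∑ u2 : Fin k → ((l : Fin L) → U l), ∏ i : Fin k, ∑ a : V, ∑ b : Z, R (u2 i, a, b) :=
        Fintype.sum_equiv (Equiv.piComm fun (l : Fin L) (_ : Fin k) => U l) _ _ (fun u => rfl)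
    _ = ∏ i : Fin k, ∑ t : (l : Fin L) → U l, ∑ a : V, ∑ b : Z, R (t, a, b) :=
        sum_fn_prod (κ := fun _ : Fin k => (l : Fin L) → U l)
          (fun (_ : Fin k) (t : (l : Fin L) → U l) => ∑ a : V, ∑ b : Z, R (t, a, b))
    _ = 1 := by rw [Finset.prod_congr rfl fun i _ => hone]; simp

lemma inducedDist_le_mul {P2 Q2 : (((l : Fin L) → U l) × V × Z) → ℝ}
    {Ch : (l : Fin L) → X l → Y l → ℝ} {k n : ℕ}
    {f : (l : Fin L) → (Fin k → U l) → (Fin n → X l) → ℝ}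
    {M : ℝ} (hPQ : ∀ s, P2 s ≤ M * Q2 s)
    (hP0 : ∀ s, 0 ≤ P2 s)
    (hCh : ∀ l, IsKernel (Ch l)) (hf : ∀ l, IsKernel (f l))
    (w : ((l : Fin L) → Fin n → Y l) × (Fin k → V) × (Fin k → Z)) :
    inducedDist P2 Ch k n f w ≤ M ^ k * inducedDist Q2 Ch k n f w := by
  unfold inducedDist
  rw [Finset.mul_sum]
  refine Finset.sum_le_sum fun u _ => ?_
  rw [Finset.mul_sum]
  refine Finset.sum_le_sum fun x _ => ?_
  have hC : 0 ≤ (∏ l, f l (u l) (x l)) * ∏ l, ∏ j : Fin n, Ch l (x l j) (w.1 l j) :=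
    mul_nonneg (Finset.prod_nonneg fun l _ => (hf l (u l)).1 _)
      (Finset.prod_nonneg fun l _ => Finset.prod_nonneg fun j _ => (hCh l (x l j)).1 _)
  have hprod : (∏ i : Fin k, P2 ((fun l => u l i), w.2.1 i, w.2.2 i)) ≤
      M ^ k * ∏ i : Fin k, Q2 ((fun l => u l i), w.2.1 i, w.2.2 i) := by
    have h := Finset.prod_le_prod (s := Finset.univ)
      (f := fun i : Fin k => P2 ((fun l => u l i), w.2.1 i, w.2.2 i))
      (g := fun i : Fin k => M * Q2 ((fun l => u l i), w.2.1 i, w.2.2 i))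
      (fun i _ => hP0 _) (fun i _ => hPQ _)
    rw [Finset.prod_mul_distrib, Finset.prod_const, Finset.card_univ, Fintype.card_fin] at h
    exact h
  calc (∏ i : Fin k, P2 ((fun l => u l i), w.2.1 i, w.2.2 i)) *
        ((∏ l, f l (u l) (x l)) * ∏ l, ∏ j : Fin n, Ch l (x l j) (w.1 l j))
      ≤ (M ^ k * ∏ i : Fin k, Q2 ((fun l => u l i), w.2.1 i, w.2.2 i)) *
        ((∏ l, f l (u l) (x l)) * ∏ l, ∏ j : Fin n, Ch l (x l j) (w.1 l j)) :=
        mul_le_mul_of_nonneg_right hprod hC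
    _ = M ^ k * ((∏ i : Fin k, Q2 ((fun l => u l i), w.2.1 i, w.2.2 i)) *
        ((∏ l, f l (u l) (x l)) * ∏ l, ∏ j : Fin n, Ch l (x l j) (w.1 l j))) := by ring

end Induced

/-- Divergence bound from a pointwise ratio bound. -/
lemma klDiv_le_of_ratio {α : Type*} [Fintype α] {p q : α → ℝ} {C : ℝ}
    (hp0 : ∀ x, 0 ≤ p x) (hp1 : ∑ x, p x = 1) (hq0 : ∀ x, 0 ≤ q x)
    (hC : 1 ≤ C) (h : ∀ x, p x ≤ C * q x) :
    klDiv p q ≤ Real.logb 2 C := by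
  have hterm : ∀ x, p x * Real.logb 2 (p x / q x) ≤ p x * Real.logb 2 C := by
    intro x
    rcases eq_or_lt_of_le (hp0 x) with h0 | h0
    · rw [← h0, zero_mul, zero_mul]
    · have hqx : 0 < q x := by
        rcases eq_or_lt_of_le (hq0 x) with hq | hq
        · exfalso; have h3 := h x; rw [← hq, mul_zero] at h3; linarith
        · exact hq
      have hratio : p x / q x ≤ C := by
        rw [div_le_iff₀ hqx]
        calc p x ≤ C * q x := h x
          _ = C * q x := rfl
      have hlb : Real.logb 2 (p x / q x) ≤ Real.logb 2 C :=
        Real.logb_le_logb_of_le one_lt_two (div_pos h0 hqx) hratio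
      exact mul_le_mul_of_nonneg_left hlb h0.le
  calc klDiv p q ≤ ∑ x, p x * Real.logb 2 C := Finset.sum_le_sum fun x _ => hterm x
    _ = Real.logb 2 C := by rw [← Finset.sum_mul, hp1, one_mul]

/-- Existence of a uniform likelihood-ratio bound. -/
lemma exists_ratio_bound {α : Type*} [Fintype α] {P2 Q2 : α → ℝ}
    (hP : IsPMF P2) (hQpos : ∀ x, 0 < Q2 x) :
    ∃ M : ℝ, 1 ≤ M ∧ ∀ x, P2 x ≤ M * Q2 x := by
  have hne : Nonempty α := by
    by_contra h
    rw [not_nonempty_iff] at h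
    have h2 := hP.2
    rw [Finset.univ_eq_empty, Finset.sum_empty] at h2
    norm_num at h2
  obtain ⟨x₀⟩ := hne
  refine ⟨max (Finset.univ.sup' ⟨x₀, Finset.mem_univ x₀⟩ (fun x => P2 x / Q2 x)) 1,
    le_max_right _ _, fun x => ?_⟩
  have h1 : P2 x / Q2 x ≤ Finset.univ.sup' ⟨x₀, Finset.mem_univ x₀⟩ (fun x => P2 x / Q2 x) :=
    Finset.le_sup' (fun x => P2 x / Q2 x) (Finset.mem_univ x)
  rw [(div_mul_cancel₀ (P2 x) (hQpos x).ne').symm]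
  exact mul_le_mul_of_nonneg_right (le_trans h1 (le_max_left _ _)) (hQpos x).le

end Aux

end DHT

open DHT Filter Real

/-- For every bandwidth ratio `τ > 0`,
`lim_{ε→0} liminf_{k→∞} (1/k)·log₂ β(k,τ,ε) ≥ −θ(τ)` (the limit as `ε → 0⁺` exists and
is at least `−θ(τ)`). -/
theorem statement_1 {L : ℕ} {U X Y : Fin L → Type} {V Z : Type}
    [∀ l, Fintype (U l)] [∀ l, Fintype (X l)] [∀ l, Fintype (Y l)]
    [Fintype V] [Fintype Z]
    (P Q : (((l : Fin L) → U l) × V × Z) → ℝ)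
    (hP : IsPMF P) (hQ : IsPMF Q) (hmarg : SameMarginals P Q) (hQpos : ∀ x, 0 < Q x)
    (Ch : (l : Fin L) → X l → Y l → ℝ) (hCh : ∀ l, IsKernel (Ch l))
    (τ : ℝ) (hτ : 0 < τ) :
    ∃ c : ℝ,
      Filter.Tendsto
        (fun ε : ℝ =>
          Filter.liminf (fun k : ℕ => Real.logb 2 (beta P Q Ch τ ε k) / k) Filter.atTop)
        (nhdsWithin 0 (Set.Ioi 0)) (nhds c) ∧
      - theta P Q Ch τ ≤ c := by
  classical
  obtain ⟨M, hM1, hMratio⟩ := Aux.exists_ratio_bound hP hQpos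
  have hQ0 : ∀ s, 0 ≤ Q s := fun s => (hQpos s).le
  -- trivial encoders
  have htrivK : ∀ k : ℕ, ∀ l : Fin L,
      IsKernel (fun (_ : Fin k → U l) (_ : Fin 0 → X l) => (1 : ℝ)) := by
    intro k l u
    refine ⟨fun _ => zero_le_one, ?_⟩
    rw [Finset.sum_const, Finset.card_univ]
    simp
  -- divergence bound by k * logb 2 M
  have hkl : ∀ (k n : ℕ) (f : (l : Fin L) → (Fin k → U l) → (Fin n → X l) → ℝ),
      (∀ l, IsKernel (f l)) →
      klDiv (inducedDist P Ch k n f) (inducedDist Q Ch k n f) ≤ (k : ℝ) * Real.logb 2 M := by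
    intro k n f hf
    have h := Aux.klDiv_le_of_ratio
      (Aux.inducedDist_nonneg hP.1 hCh hf) (Aux.sum_inducedDist hP hCh hf)
      (Aux.inducedDist_nonneg hQ0 hCh hf) (one_le_pow₀ hM1)
      (fun w => Aux.inducedDist_le_mul hMratio hP.1 hCh hf w)
    rwa [Real.logb_pow] at h
  -- absolute continuity of induced distributions
  have habsI : ∀ (k n : ℕ) (f : (l : Fin L) → (Fin k → U l) → (Fin n → X l) → ℝ),
      (∀ l, IsKernel (f l)) → ∀ w,
      inducedDist Q Ch k n f w = 0 → inducedDist P Ch k n f w = 0 := by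
    intro k n f hf w h0
    have h1 := Aux.inducedDist_le_mul hMratio hP.1 hCh hf (Q2 := Q) w
    have h2 := Aux.inducedDist_nonneg hP.1 hCh hf w
    rw [h0, mul_zero] at h1
    linarith
  -- θ_k sets
  have hKne : ∀ k : ℕ, {d | ∃ n : ℕ, (n : ℝ) ≤ τ * k ∧
      ∃ f : (l : Fin L) → (Fin k → U l) → (Fin n → X l) → ℝ,
        (∀ l, IsKernel (f l)) ∧
        d = klDiv (inducedDist P Ch k n f) (inducedDist Q Ch k n f) / k}.Nonempty := by
    intro k
    refine ⟨_, 0, ?_, fun l _ _ => (1 : ℝ), htrivK k, rfl⟩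
    rw [Nat.cast_zero]
    exact mul_nonneg hτ.le (Nat.cast_nonneg k)
  have hKbdd : ∀ k : ℕ, 1 ≤ k → ∀ d ∈ {d | ∃ n : ℕ, (n : ℝ) ≤ τ * k ∧
      ∃ f : (l : Fin L) → (Fin k → U l) → (Fin n → X l) → ℝ,
        (∀ l, IsKernel (f l)) ∧
        d = klDiv (inducedDist P Ch k n f) (inducedDist Q Ch k n f) / k},
      d ≤ Real.logb 2 M := by
    rintro k hk d ⟨n, hn, f, hf, rfl⟩
    have hkpos : (0:ℝ) < k := by exact_mod_cast hk
    rw [div_le_iff₀ hkpos]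
    have := hkl k n f hf
    linarith
  have hθbdd : BddAbove {d | ∃ k : ℕ, 1 ≤ k ∧ d = thetaK P Q Ch τ k} := by
    refine ⟨Real.logb 2 M, ?_⟩
    rintro d ⟨k, hk, rfl⟩
    exact csSup_le (hKne k) (hKbdd k hk)
  -- divergence vs θ(τ)
  have hklθ : ∀ (k : ℕ), 1 ≤ k → ∀ (n : ℕ), (n : ℝ) ≤ τ * k →
      ∀ (f : (l : Fin L) → (Fin k → U l) → (Fin n → X l) → ℝ), (∀ l, IsKernel (f l)) →
      klDiv (inducedDist P Ch k n f) (inducedDist Q Ch k n f) ≤ (k : ℝ) * theta P Q Ch τ := by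
    intro k hk n hn f hf
    have hkpos : (0:ℝ) < k := by exact_mod_cast hk
    have h1 : klDiv (inducedDist P Ch k n f) (inducedDist Q Ch k n f) / k ≤ thetaK P Q Ch τ k :=
      le_csSup ⟨Real.logb 2 M, fun d hd => hKbdd k hk d hd⟩ ⟨n, hn, f, hf, rfl⟩
    have h2 : thetaK P Q Ch τ k ≤ theta P Q Ch τ := le_csSup hθbdd ⟨k, hk, rfl⟩
    have h3 := (div_le_iff₀ hkpos).1 (h1.trans h2)
    linarith
  -- β facts
  have hBbdd : ∀ (ε : ℝ) (k : ℕ), BddBelow {b | ∃ n : ℕ, (n : ℝ) ≤ τ * k ∧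
      ∃ f : (l : Fin L) → (Fin k → U l) → (Fin n → X l) → ℝ,
        (∀ l, IsKernel (f l)) ∧
        ∃ A : Set (((l : Fin L) → Fin n → Y l) × (Fin k → V) × (Fin k → Z)),
          probIn (inducedDist P Ch k n f) Aᶜ ≤ ε ∧
          b = probIn (inducedDist Q Ch k n f) A} := by
    intro ε k
    refine ⟨0, ?_⟩
    rintro b ⟨n, hn, f, hf, A, h1, rfl⟩
    exact Aux.probIn_nonneg (Aux.inducedDist_nonneg hQ0 hCh hf) A
  have hBmem1 : ∀ (ε : ℝ), 0 ≤ ε → ∀ (k : ℕ), (1:ℝ) ∈ {b | ∃ n : ℕ, (n : ℝ) ≤ τ * k ∧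
      ∃ f : (l : Fin L) → (Fin k → U l) → (Fin n → X l) → ℝ,
        (∀ l, IsKernel (f l)) ∧
        ∃ A : Set (((l : Fin L) → Fin n → Y l) × (Fin k → V) × (Fin k → Z)),
          probIn (inducedDist P Ch k n f) Aᶜ ≤ ε ∧
          b = probIn (inducedDist Q Ch k n f) A} := by
    intro ε hε k
    refine ⟨0, by rw [Nat.cast_zero]; exact mul_nonneg hτ.le (Nat.cast_nonneg k),
      fun l _ _ => (1 : ℝ), htrivK k, Set.univ, ?_, ?_⟩
    · rw [Set.compl_univ, Aux.probIn_empty]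
      exact hε
    · rw [Aux.probIn_univ,
        Aux.sum_inducedDist hQ hCh (htrivK k)]
  have hbeta_le_one : ∀ (ε : ℝ), 0 ≤ ε → ∀ (k : ℕ), beta P Q Ch τ ε k ≤ 1 := by
    intro ε hε k
    exact csInf_le (hBbdd ε k) (hBmem1 ε hε k)
  have hbeta_lb : ∀ (ε : ℝ), ε ∈ Set.Ioo (0:ℝ) 1 → ∀ (k : ℕ), 1 ≤ k →
      (2:ℝ) ^ (-((k:ℝ) * theta P Q Ch τ + 3) / (1 - ε)) ≤ beta P Q Ch τ ε k := by
    intro ε hε k hk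
    refine le_csInf ⟨1, hBmem1 ε hε.1.le k⟩ ?_
    rintro b ⟨n, hn, f, hf, A, h1, rfl⟩
    obtain ⟨hbpos, hblog⟩ := Aux.main_bound
      (Aux.inducedDist_nonneg hP.1 hCh hf) (Aux.sum_inducedDist hP hCh hf)
      (Aux.inducedDist_nonneg hQ0 hCh hf) (Aux.sum_inducedDist hQ hCh hf)
      (habsI k n f hf) A hε.2 h1
    have hd : -((k:ℝ) * theta P Q Ch τ + 3) / (1 - ε) ≤
        Real.logb 2 (probIn (inducedDist Q Ch k n f) A) := by
      refine le_trans ?_ hblog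
      have h2 := hklθ k hk n hn f hf
      have hεp : 0 < 1 - ε := by linarith [hε.2]
      apply div_le_div_of_nonneg_right ?_ hεp.le
      linarith
    calc (2:ℝ) ^ (-((k:ℝ) * theta P Q Ch τ + 3) / (1 - ε))
        ≤ (2:ℝ) ^ Real.logb 2 (probIn (inducedDist Q Ch k n f) A) :=
          Real.rpow_le_rpow_left_iff one_lt_two |>.2 hd
      _ = probIn (inducedDist Q Ch k n f) A := Real.rpow_logb two_pos (by norm_num) hbpos
  have hbeta_pos : ∀ (ε : ℝ), ε ∈ Set.Ioo (0:ℝ) 1 → ∀ (k : ℕ), 1 ≤ k →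
      0 < beta P Q Ch τ ε k := fun ε hε k hk =>
    lt_of_lt_of_le (Real.rpow_pos_of_pos two_pos _) (hbeta_lb ε hε k hk)
  -- logarithmic bounds on the β sequence
  have hlog_lb : ∀ (ε : ℝ), ε ∈ Set.Ioo (0:ℝ) 1 → ∀ (k : ℕ), 1 ≤ k →
      -(theta P Q Ch τ + 3 / (k:ℝ)) / (1 - ε) ≤ Real.logb 2 (beta P Q Ch τ ε k) / k := by
    intro ε hε k hk
    have hkpos : (0:ℝ) < k := by exact_mod_cast hk
    have h1 : -((k:ℝ) * theta P Q Ch τ + 3) / (1 - ε) ≤ Real.logb 2 (beta P Q Ch τ ε k) := by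
      have := Real.logb_le_logb_of_le one_lt_two (Real.rpow_pos_of_pos two_pos _)
        (hbeta_lb ε hε k hk)
      rwa [Real.logb_rpow two_pos (by norm_num)] at this
    have h2 : -((k:ℝ) * theta P Q Ch τ + 3) / (1 - ε) / k ≤
        Real.logb 2 (beta P Q Ch τ ε k) / k := div_le_div_of_nonneg_right h1 hkpos.le
    have h3 : -((k:ℝ) * theta P Q Ch τ + 3) / (1 - ε) / k =
        -(theta P Q Ch τ + 3 / (k:ℝ)) / (1 - ε) := by
      have hεne : (1:ℝ) - ε ≠ 0 := by have := hε.2; intro h; rw [sub_eq_zero] at h; linarith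
      field_simp
    rwa [h3] at h2
  have hlog_lb' : ∀ (ε : ℝ), ε ∈ Set.Ioo (0:ℝ) 1 → ∀ (k : ℕ), 1 ≤ k →
      -(theta P Q Ch τ + 3) / (1 - ε) ≤ Real.logb 2 (beta P Q Ch τ ε k) / k := by
    intro ε hε k hk
    refine le_trans ?_ (hlog_lb ε hε k hk)
    have hεp : 0 < 1 - ε := by linarith [hε.2]
    have hkpos : (0:ℝ) < k := by exact_mod_cast hk
    apply div_le_div_of_nonneg_right ?_ hεp.le
    have hk1 : (1:ℝ) ≤ k := by exact_mod_cast hk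
    have h4 : 3 / (k:ℝ) ≤ 3 := by
      rw [div_le_iff₀ hkpos]
      nlinarith
    linarith
  have hlog_ub : ∀ (ε : ℝ), ε ∈ Set.Ioo (0:ℝ) 1 → ∀ (k : ℕ), 1 ≤ k →
      Real.logb 2 (beta P Q Ch τ ε k) / k ≤ 0 := by
    intro ε hε k hk
    have h1 : Real.logb 2 (beta P Q Ch τ ε k) ≤ 0 :=
      Real.logb_nonpos one_lt_two (hbeta_pos ε hε k hk).le (hbeta_le_one ε hε.1.le k)
    exact div_nonpos_of_nonpos_of_nonneg h1 (Nat.cast_nonneg k)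
  -- the liminf function
  set g : ℝ → ℝ := fun ε =>
    Filter.liminf (fun k : ℕ => Real.logb 2 (beta P Q Ch τ ε k) / k) Filter.atTop with hg
  have hbddg : ∀ (ε : ℝ), ε ∈ Set.Ioo (0:ℝ) 1 →
      Filter.IsBoundedUnder (· ≥ ·) Filter.atTop
        (fun k : ℕ => Real.logb 2 (beta P Q Ch τ ε k) / k) := by
    intro ε hε
    refine ⟨-(theta P Q Ch τ + 3) / (1 - ε), Filter.eventually_map.2 ?_⟩
    filter_upwards [Filter.eventually_ge_atTop 1] with k hk
    exact hlog_lb' ε hε k hk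
  have hcobdd : ∀ (ε : ℝ), ε ∈ Set.Ioo (0:ℝ) 1 →
      Filter.IsCoboundedUnder (· ≥ ·) Filter.atTop
        (fun k : ℕ => Real.logb 2 (beta P Q Ch τ ε k) / k) := by
    intro ε hε
    refine Filter.isCoboundedUnder_ge_of_eventually_le Filter.atTop (x := 0) ?_
    filter_upwards [Filter.eventually_ge_atTop 1] with k hk
    exact hlog_ub ε hε k hk
  have hgub : ∀ (ε : ℝ), ε ∈ Set.Ioo (0:ℝ) 1 → g ε ≤ 0 := by
    intro ε hε
    have h := Filter.liminf_le_liminf (f := Filter.atTop)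
      (u := fun k : ℕ => Real.logb 2 (beta P Q Ch τ ε k) / k) (v := fun _ : ℕ => (0:ℝ))
      (by filter_upwards [Filter.eventually_ge_atTop 1] with k hk; exact hlog_ub ε hε k hk)
      (hbddg ε hε)
      (Filter.isCoboundedUnder_ge_of_le Filter.atTop (x := 0) fun _ => le_rfl)
    rwa [Filter.liminf_const] at h
  have hglb : ∀ (ε : ℝ), ε ∈ Set.Ioo (0:ℝ) 1 → -theta P Q Ch τ / (1 - ε) ≤ g ε := by
    intro ε hε
    have hεp : 0 < 1 - ε := by linarith [hε.2]
    have hφt : Filter.Tendsto (fun k : ℕ => -(theta P Q Ch τ + 3 / (k:ℝ)) / (1 - ε))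
        Filter.atTop (nhds (-theta P Q Ch τ / (1 - ε))) := by
      have h0 : Filter.Tendsto (fun k : ℕ => 3 / (k:ℝ)) Filter.atTop (nhds 0) := by
        have := tendsto_one_div_atTop_nhds_zero_nat.const_mul (3:ℝ)
        simpa [div_eq_mul_inv, mul_comm] using this
      have h1 : Filter.Tendsto (fun k : ℕ => -(theta P Q Ch τ + 3 / (k:ℝ)))
          Filter.atTop (nhds (-(theta P Q Ch τ + 0))) := (tendsto_const_nhds.add h0).neg
      have h2 := h1.div_const (1 - ε)
      simpa using h2
    have h := Filter.liminf_le_liminf (f := Filter.atTop)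
      (u := fun k : ℕ => -(theta P Q Ch τ + 3 / (k:ℝ)) / (1 - ε))
      (v := fun k : ℕ => Real.logb 2 (beta P Q Ch τ ε k) / k)
      (by filter_upwards [Filter.eventually_ge_atTop 1] with k hk; exact hlog_lb ε hε k hk)
      hφt.isBoundedUnder_ge
      (hcobdd ε hε)
    rwa [hφt.liminf_eq] at h
  -- monotonicity of g on (0,1)
  have hganti : AntitoneOn g (Set.Ioo (0:ℝ) 1) := by
    intro ε₁ hε₁ ε₂ hε₂ h12
    have hmono : ∀ k : ℕ, 1 ≤ k →
        Real.logb 2 (beta P Q Ch τ ε₂ k) / k ≤ Real.logb 2 (beta P Q Ch τ ε₁ k) / k := by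
      intro k hk
      have hkpos : (0:ℝ) ≤ k := Nat.cast_nonneg k
      have hsub : beta P Q Ch τ ε₂ k ≤ beta P Q Ch τ ε₁ k := by
        refine csInf_le_csInf (hBbdd ε₂ k) ⟨1, hBmem1 ε₁ hε₁.1.le k⟩ ?_
        rintro b ⟨n, hn, f, hf, A, h1, rfl⟩
        exact ⟨n, hn, f, hf, A, h1.trans h12, rfl⟩
      have := Real.logb_le_logb_of_le one_lt_two (hbeta_pos ε₂ hε₂ k hk) hsub
      exact div_le_div_of_nonneg_right this hkpos
    exact Filter.liminf_le_liminf
      (by filter_upwards [Filter.eventually_ge_atTop 1] with k hk; exact hmono k hk)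
      (hbddg ε₂ hε₂) (hcobdd ε₁ hε₁)
  have hbddim : BddAbove (g '' Set.Ioo (0:ℝ) 1) := by
    refine ⟨0, ?_⟩
    rintro _ ⟨ε, hε, rfl⟩
    exact hgub ε hε
  have hne : (Set.Ioo (0:ℝ) 1).Nonempty := ⟨1/2, by norm_num⟩
  have hT : Filter.Tendsto g (nhdsWithin 0 (Set.Ioi 0))
      (nhds (sSup (g '' Set.Ioo (0:ℝ) 1))) :=
    AntitoneOn.tendsto_nhdsWithin_Ioo_right hne hganti hbddim
  refine ⟨sSup (g '' Set.Ioo (0:ℝ) 1), hT, ?_⟩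
  -- c ≥ -θ
  have hlim2 : Filter.Tendsto (fun ε : ℝ => -theta P Q Ch τ / (1 - ε))
      (nhdsWithin 0 (Set.Ioi 0)) (nhds (-theta P Q Ch τ)) := by
    have hc : ContinuousAt (fun ε : ℝ => -theta P Q Ch τ / (1 - ε)) 0 := by
      apply ContinuousAt.div
      · exact continuousAt_const
      · exact (continuous_const.sub continuous_id).continuousAt
      · norm_num
    have h5 := hc.tendsto.mono_left (nhdsWithin_le_nhds (s := Set.Ioi (0:ℝ)))
    simpa using h5
  have hev : ∀ᶠ ε in nhdsWithin 0 (Set.Ioi (0:ℝ)),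
      -theta P Q Ch τ / (1 - ε) ≤ g ε := by
    filter_upwards [Ioo_mem_nhdsGT one_pos] with ε hε
    exact hglb ε hε
  exact le_of_tendsto_of_tendsto hlim2 hT hev
end
end

section
/- Let (U,V,Z) be random variables on finite sets with joint pmf P_{UVZ} and let c ≥ 0. Then the infimum, over all finite random variables W with (Z,V)−U−W a Markov chain and I(U;W|V,Z) ≤ c, of max{ H(V|W,Z), H(V|W,Z) + I(U;W|Z) − c }, equals the infimum, over all finite W with (Z,V)−U−W a Markov chain and I(U;W|Z) ≤ c, of H(V|W,Z). -/
open Filter Real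

noncomputable section

open DHT Filter Real

section S14Aux

open Finset Real

variable {Uu V Z : Type} [Fintype Uu] [Fintype V] [Fintype Z] {nw : ℕ}

/- ## Generic sum helpers -/

lemma s14_sum3 {α β γ : Type*} [Fintype α] [Fintype β] [Fintype γ] (f : α × β × γ → ℝ) :
    ∑ x, f x = ∑ a, ∑ b, ∑ c, f (a,b,c) := by
  rw [Fintype.sum_prod_type]
  exact Finset.sum_congr rfl fun a _ => Fintype.sum_prod_type _

lemma s14_si3 {α β γ : Type*} [Fintype α] [Fintype β] [Fintype γ] (f : α → β → γ → ℝ) :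
    ∑ a, ∑ b, ∑ c, f a b c = ∑ a, ∑ c, ∑ b, f a b c :=
  Finset.sum_congr rfl fun _ _ => Finset.sum_comm

lemma s14_sc3 {α β γ : Type*} [Fintype α] [Fintype β] [Fintype γ] (f : α → β → γ → ℝ) :
    ∑ a, ∑ b, ∑ c, f a b c = ∑ c, ∑ a, ∑ b, f a b c := by
  rw [s14_si3]; exact Finset.sum_comm

lemma s14_rev3 {α β γ : Type*} [Fintype α] [Fintype β] [Fintype γ] (f : α → β → γ → ℝ) :
    ∑ a, ∑ b, ∑ c, f a b c = ∑ c, ∑ b, ∑ a, f a b c := by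
  rw [s14_sc3]; exact Finset.sum_congr rfl fun _ _ => Finset.sum_comm

lemma s14_sc4 {α β γ δ : Type*} [Fintype α] [Fintype β] [Fintype γ] [Fintype δ]
    (f : α → β → γ → δ → ℝ) :
    ∑ a, ∑ b, ∑ c, ∑ d, f a b c d = ∑ d, ∑ a, ∑ b, ∑ c, f a b c d :=
  (Finset.sum_congr rfl fun a _ => s14_sc3 (f a)).trans Finset.sum_comm

-- permutations to the canonical order (u,v,z,w)
lemma s14_P1 {α β γ δ : Type*} [Fintype α] [Fintype β] [Fintype γ] [Fintype δ]
    (f : α → β → γ → δ → ℝ) :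
    ∑ a, ∑ d, ∑ c, ∑ b, f a b c d = ∑ a, ∑ b, ∑ c, ∑ d, f a b c d :=
  Finset.sum_congr rfl fun a _ => s14_rev3 _

lemma s14_P2 {α β γ δ : Type*} [Fintype α] [Fintype β] [Fintype γ] [Fintype δ]
    (f : α → β → γ → δ → ℝ) :
    ∑ b, ∑ d, ∑ c, ∑ a, f a b c d = ∑ a, ∑ b, ∑ c, ∑ d, f a b c d := by
  rw [s14_sc4 (fun b d c a => f a b c d)]
  exact Finset.sum_congr rfl fun a _ => Finset.sum_congr rfl fun b _ => Finset.sum_comm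

lemma s14_P3 {α β γ δ : Type*} [Fintype α] [Fintype β] [Fintype γ] [Fintype δ]
    (f : α → β → γ → δ → ℝ) :
    ∑ a, ∑ d, ∑ b, ∑ c, f a b c d = ∑ a, ∑ b, ∑ c, ∑ d, f a b c d :=
  Finset.sum_congr rfl fun a _ => (s14_sc3 _).symm

lemma s14_P4 {α β γ δ : Type*} [Fintype α] [Fintype β] [Fintype γ] [Fintype δ]
    (f : α → β → γ → δ → ℝ) :
    ∑ b, ∑ c, ∑ a, ∑ d, f a b c d = ∑ a, ∑ b, ∑ c, ∑ d, f a b c d :=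
  ((Finset.sum_congr rfl fun b _ => Finset.sum_comm).trans Finset.sum_comm : _)

lemma s14_sum4_add (f g : Uu → V → Z → Fin nw → ℝ) :
    (∑ u, ∑ v, ∑ z, ∑ w, f u v z w) + (∑ u, ∑ v, ∑ z, ∑ w, g u v z w)
      = ∑ u, ∑ v, ∑ z, ∑ w, (f u v z w + g u v z w) := by
  simp only [← Finset.sum_add_distrib]

lemma s14_sum4_congr {f g : Uu → V → Z → Fin nw → ℝ} (h : ∀ u v z w, f u v z w = g u v z w) :
    ∑ u, ∑ v, ∑ z, ∑ w, f u v z w = ∑ u, ∑ v, ∑ z, ∑ w, g u v z w :=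
  Finset.sum_congr rfl fun u _ => Finset.sum_congr rfl fun v _ =>
    Finset.sum_congr rfl fun z _ => Finset.sum_congr rfl fun w _ => h u v z w

/- ## KL-type nonnegativity -/

lemma s14_klish {α : Type*} [Fintype α] (p q : α → ℝ) (hp : ∀ a, 0 ≤ p a) (hq : ∀ a, 0 ≤ q a)
    (hac : ∀ a, q a = 0 → p a = 0) (hps : ∑ a, p a = 1) (hqs : ∑ a, q a ≤ 1) :
    0 ≤ ∑ a, p a * Real.logb 2 (p a / q a) := by
  have key : ∀ a, p a - q a ≤ p a * Real.log (p a / q a) := by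
    intro a
    rcases eq_or_lt_of_le (hp a) with h0 | hpa
    · simp [← h0]; exact hq a
    · have hqa : 0 < q a := lt_of_le_of_ne (hq a) (fun h => by
        have := hac a h.symm; linarith)
      have h1 : Real.log (q a / p a) ≤ q a / p a - 1 :=
        Real.log_le_sub_one_of_pos (by positivity)
      have h2 : Real.log (q a / p a) = - Real.log (p a / q a) := by
        rw [← Real.log_inv]; congr 1; field_simp
      rw [h2] at h1
      have h3 : 1 - q a / p a ≤ Real.log (p a / q a) := by linarith
      calc p a - q a = p a * (1 - q a / p a) := by field_simp
        _ ≤ p a * Real.log (p a / q a) := mul_le_mul_of_nonneg_left h3 (le_of_lt hpa)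
  have h4 : 0 ≤ ∑ a, p a * Real.log (p a / q a) := by
    calc (0:ℝ) = 1 - 1 := by ring
      _ ≤ ∑ a, p a - ∑ a, q a := by rw [hps]; linarith
      _ = ∑ a, (p a - q a) := by rw [Finset.sum_sub_distrib]
      _ ≤ ∑ a, p a * Real.log (p a / q a) := Finset.sum_le_sum (fun a _ => key a)
  have h5 : ∑ a, p a * Real.logb 2 (p a / q a)
      = (∑ a, p a * Real.log (p a / q a)) / Real.log 2 := by
    rw [Finset.sum_div]
    exact Finset.sum_congr rfl fun a _ => by rw [Real.logb, mul_div_assoc]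
  rw [h5]; positivity

lemma s14_condMI_nonneg {α β γ : Type*} [Fintype α] [Fintype β] [Fintype γ]
    (p : α × β × γ → ℝ) (hp : ∀ x, 0 ≤ p x) (hs : ∑ x, p x = 1) :
    0 ≤ condMI p := by
  set q : α × β × γ → ℝ := fun x =>
    (∑ b, p (x.1, b, x.2.2)) * (∑ a, p (a, x.2.1, x.2.2)) / (∑ a, ∑ b, p (a, b, x.2.2))
    with hqdef
  have hrw : condMI p = ∑ x, p x * Real.logb 2 (p x / q x) := by
    unfold condMI
    refine Finset.sum_congr rfl fun x _ => ?_
    rw [hqdef]; congr 1; rw [div_div_eq_mul_div]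
  rw [hrw]
  have hple1 : ∀ x : α × β × γ, p x ≤ ∑ b, p (x.1, b, x.2.2) := fun x =>
    Finset.single_le_sum (fun b _ => hp (x.1, b, x.2.2)) (Finset.mem_univ x.2.1)
  have hple2 : ∀ x : α × β × γ, p x ≤ ∑ a, p (a, x.2.1, x.2.2) := fun x =>
    Finset.single_le_sum (fun a _ => hp (a, x.2.1, x.2.2)) (Finset.mem_univ x.1)
  have hple3 : ∀ x : α × β × γ, p x ≤ ∑ a, ∑ b, p (a, b, x.2.2) := by
    intro x
    calc p x ≤ ∑ b, p (x.1, b, x.2.2) := hple1 x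
      _ ≤ ∑ a, ∑ b, p (a, b, x.2.2) := Finset.single_le_sum
          (fun a _ => Finset.sum_nonneg fun b _ => hp (a, b, x.2.2)) (Finset.mem_univ x.1)
  apply s14_klish p q hp
  · intro x
    have h1 : 0 ≤ ∑ b, p (x.1, b, x.2.2) := Finset.sum_nonneg fun b _ => hp _
    have h2 : 0 ≤ ∑ a, p (a, x.2.1, x.2.2) := Finset.sum_nonneg fun a _ => hp _
    have h3 : 0 ≤ ∑ a, ∑ b, p (a, b, x.2.2) :=
      Finset.sum_nonneg fun a _ => Finset.sum_nonneg fun b _ => hp _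
    positivity
  · intro x hx
    by_contra hne
    have hpx : 0 < p x := lt_of_le_of_ne (hp x) (Ne.symm hne)
    have h1 : 0 < ∑ b, p (x.1, b, x.2.2) := lt_of_lt_of_le hpx (hple1 x)
    have h2 : 0 < ∑ a, p (a, x.2.1, x.2.2) := lt_of_lt_of_le hpx (hple2 x)
    have h3 : 0 < ∑ a, ∑ b, p (a, b, x.2.2) := lt_of_lt_of_le hpx (hple3 x)
    have : 0 < q x := by rw [hqdef]; positivity
    rw [hx] at this; exact lt_irrefl 0 this
  · exact hs
  · have hM : ∀ c : γ, 0 ≤ ∑ a, ∑ b, p (a,b,c) :=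
      fun c => Finset.sum_nonneg fun a _ => Finset.sum_nonneg fun b _ => hp _
    calc ∑ x, q x = ∑ c, ∑ a, ∑ b, q (a,b,c) := by rw [s14_sum3 q, s14_sc3]
      _ = ∑ c, (∑ a, ∑ b, p (a,b,c)) * (∑ a, ∑ b, p (a,b,c)) / (∑ a, ∑ b, p (a,b,c)) := by
          refine Finset.sum_congr rfl fun c _ => ?_
          have h6 : ∀ a, ∑ b, q (a,b,c) =
              (∑ b', p (a,b',c)) * (∑ b, ∑ a', p (a',b,c)) / (∑ a', ∑ b', p (a',b',c)) := by
            intro a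
            rw [hqdef]
            simp only []
            rw [← Finset.sum_div, ← Finset.mul_sum]
          rw [Finset.sum_congr rfl (fun a _ => h6 a), ← Finset.sum_div, ← Finset.sum_mul]
          rw [Finset.sum_comm (f := fun b a' => p (a',b,c))]
      _ ≤ ∑ c, ∑ a, ∑ b, p (a,b,c) := by
          refine Finset.sum_le_sum fun c _ => ?_
          rcases eq_or_lt_of_le (hM c) with h0 | h0
          · rw [← h0]; simp
          · rw [mul_div_assoc, div_self (ne_of_gt h0), mul_one]
      _ = 1 := by rw [← s14_sc3, ← s14_sum3 p, hs]

lemma s14_condEntropy_nonneg {α β : Type*} [Fintype α] [Fintype β]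
    (p : α × β → ℝ) (hp : ∀ x, 0 ≤ p x) : 0 ≤ condEntropy p := by
  unfold condEntropy
  rw [neg_nonneg]
  apply Finset.sum_nonpos
  intro x _
  rcases eq_or_lt_of_le (hp x) with h0 | hpx
  · rw [← h0, zero_mul]
  · have hD : p x ≤ ∑ a, p (a, x.2) := by
      have := Finset.single_le_sum (f := fun a => p (a, x.2))
        (fun a _ => hp (a, x.2)) (Finset.mem_univ x.1)
      simpa using this
    have hD0 : 0 < ∑ a, p (a, x.2) := lt_of_lt_of_le hpx hD
    have hle1 : p x / (∑ a, p (a, x.2)) ≤ 1 := (div_le_one hD0).2 hD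
    have : Real.logb 2 (p x / (∑ a, p (a, x.2))) ≤ 0 :=
      Real.logb_nonpos one_lt_two (by positivity) hle1
    exact mul_nonpos_of_nonneg_of_nonpos (le_of_lt hpx) this

end S14Aux


section S14Rep

open Finset Real DHT

variable {Uu V Z : Type} [Fintype Uu] [Fintype V] [Fintype Z] {nw : ℕ}

/-- marginals of a joint pmf on `(U × V × Z) × W` -/
def jmZ (J : (Uu × V × Z) × Fin nw → ℝ) (z : Z) : ℝ := ∑ u, ∑ v, ∑ w, J ((u,v,z),w)
def jmUZ (J : (Uu × V × Z) × Fin nw → ℝ) (u : Uu) (z : Z) : ℝ := ∑ v, ∑ w, J ((u,v,z),w)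
def jmVZ (J : (Uu × V × Z) × Fin nw → ℝ) (v : V) (z : Z) : ℝ := ∑ u, ∑ w, J ((u,v,z),w)
def jmWZ (J : (Uu × V × Z) × Fin nw → ℝ) (w : Fin nw) (z : Z) : ℝ := ∑ u, ∑ v, J ((u,v,z),w)
def jmUWZ (J : (Uu × V × Z) × Fin nw → ℝ) (u : Uu) (w : Fin nw) (z : Z) : ℝ := ∑ v, J ((u,v,z),w)
def jmVWZ (J : (Uu × V × Z) × Fin nw → ℝ) (v : V) (w : Fin nw) (z : Z) : ℝ := ∑ u, J ((u,v,z),w)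
def jmUVZ (J : (Uu × V × Z) × Fin nw → ℝ) (u : Uu) (v : V) (z : Z) : ℝ := ∑ w, J ((u,v,z),w)
def jmU (J : (Uu × V × Z) × Fin nw → ℝ) (u : Uu) : ℝ := ∑ z, ∑ v, ∑ w, J ((u,v,z),w)
def jmUW (J : (Uu × V × Z) × Fin nw → ℝ) (u : Uu) (w : Fin nw) : ℝ := ∑ z, ∑ v, J ((u,v,z),w)

variable (J : (Uu × V × Z) × Fin nw → ℝ)

/- representation lemmas -/

lemma rep_miUW_Z :
    miUW_Z J = ∑ u, ∑ v, ∑ z, ∑ w, J ((u,v,z),w) *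
      Real.logb 2 (jmUWZ J u w z * jmZ J z / (jmUZ J u z * jmWZ J w z)) := by
  unfold miUW_Z condMI
  simp only [Fintype.sum_prod_type]
  rw [← s14_P1 (fun u v z w => J ((u,v,z),w) *
      Real.logb 2 (jmUWZ J u w z * jmZ J z / (jmUZ J u z * jmWZ J w z)))]
  refine Finset.sum_congr rfl fun u _ => Finset.sum_congr rfl fun w _ =>
    Finset.sum_congr rfl fun z _ => ?_
  rw [show (∑ a, ∑ b, ∑ v, J ((a,v,z),b)) = jmZ J z from
      Finset.sum_congr rfl fun a _ => Finset.sum_comm,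
    show (∑ b, ∑ v, J ((u,v,z),b)) = jmUZ J u z from Finset.sum_comm]
  rw [Finset.sum_mul]
  rfl

lemma rep_miVW_Z :
    miVW_Z J = ∑ u, ∑ v, ∑ z, ∑ w, J ((u,v,z),w) *
      Real.logb 2 (jmVWZ J v w z * jmZ J z / (jmVZ J v z * jmWZ J w z)) := by
  unfold miVW_Z condMI
  simp only [Fintype.sum_prod_type]
  rw [← s14_P2 (fun u v z w => J ((u,v,z),w) *
      Real.logb 2 (jmVWZ J v w z * jmZ J z / (jmVZ J v z * jmWZ J w z)))]
  refine Finset.sum_congr rfl fun v _ => Finset.sum_congr rfl fun w _ =>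
    Finset.sum_congr rfl fun z _ => ?_
  rw [show (∑ a, ∑ b, ∑ u, J ((u,a,z),b)) = jmZ J z from s14_sc3 _,
    show (∑ b, ∑ u, J ((u,v,z),b)) = jmVZ J v z from Finset.sum_comm,
    show (∑ a, ∑ u, J ((u,a,z),w)) = jmWZ J w z from Finset.sum_comm]
  rw [Finset.sum_mul]
  rfl

lemma rep_miUW_VZ :
    miUW_VZ J = ∑ u, ∑ v, ∑ z, ∑ w, J ((u,v,z),w) *
      Real.logb 2 (J ((u,v,z),w) * jmVZ J v z / (jmUVZ J u v z * jmVWZ J v w z)) := by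
  unfold miUW_VZ condMI
  simp only [Fintype.sum_prod_type]
  rw [← s14_P3 (fun u v z w => J ((u,v,z),w) *
      Real.logb 2 (J ((u,v,z),w) * jmVZ J v z / (jmUVZ J u v z * jmVWZ J v w z)))]
  rfl

lemma rep_entV_WZ :
    entV_WZ J = -∑ u, ∑ v, ∑ z, ∑ w, J ((u,v,z),w) *
      Real.logb 2 (jmVWZ J v w z / jmWZ J w z) := by
  unfold entV_WZ condEntropy
  congr 1
  rw [Fintype.sum_prod_type]
  rw [← s14_P2 (fun u v z w => J ((u,v,z),w) *
      Real.logb 2 (jmVWZ J v w z / jmWZ J w z))]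
  refine Finset.sum_congr rfl fun v _ => ?_
  rw [Fintype.sum_prod_type]
  refine Finset.sum_congr rfl fun w _ => Finset.sum_congr rfl fun z _ => ?_
  dsimp only
  rw [show (∑ a, ∑ u, J ((u,a,z),w)) = jmWZ J w z from Finset.sum_comm]
  rw [Finset.sum_mul]
  rfl

lemma rep_entV_Z (P : Uu × V × Z → ℝ) (hmarg : ∀ x, (∑ w, J (x, w)) = P x) :
    entV_Z P = -∑ u, ∑ v, ∑ z, ∑ w, J ((u,v,z),w) *
      Real.logb 2 (jmVZ J v z / jmZ J z) := by
  unfold entV_Z condEntropy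
  congr 1
  rw [Fintype.sum_prod_type]
  rw [← s14_P4 (fun u v z w => J ((u,v,z),w) *
      Real.logb 2 (jmVZ J v z / jmZ J z))]
  refine Finset.sum_congr rfl fun v _ => Finset.sum_congr rfl fun z _ => ?_
  dsimp only
  simp only [← hmarg]
  rw [show (∑ a, ∑ u, ∑ w, J ((u,a,z),w)) = jmZ J z from Finset.sum_comm]
  simp only [Finset.sum_mul]
  rfl

end S14Rep


section S14Chain

open Finset Real DHT

variable {Uu V Z : Type} [Fintype Uu] [Fintype V] [Fintype Z] {nw : ℕ}
variable (J : (Uu × V × Z) × Fin nw → ℝ)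

/- pointwise bounds -/
section bounds
variable {J}

lemma le_jmUWZ (hJ : ∀ x, 0 ≤ J x) (u : Uu) (v : V) (z : Z) (w : Fin nw) :
    J ((u,v,z),w) ≤ jmUWZ J u w z :=
  Finset.single_le_sum (fun v' _ => hJ ((u,v',z),w)) (Finset.mem_univ v)

lemma le_jmVWZ (hJ : ∀ x, 0 ≤ J x) (u : Uu) (v : V) (z : Z) (w : Fin nw) :
    J ((u,v,z),w) ≤ jmVWZ J v w z :=
  Finset.single_le_sum (fun u' _ => hJ ((u',v,z),w)) (Finset.mem_univ u)

lemma le_jmUVZ (hJ : ∀ x, 0 ≤ J x) (u : Uu) (v : V) (z : Z) (w : Fin nw) :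
    J ((u,v,z),w) ≤ jmUVZ J u v z :=
  Finset.single_le_sum (fun w' _ => hJ ((u,v,z),w')) (Finset.mem_univ w)

lemma jm_nonneg2 (hJ : ∀ x, 0 ≤ J x) (v : V) (z : Z) (w : Fin nw) : 0 ≤ jmVWZ J v w z :=
  Finset.sum_nonneg fun _ _ => hJ _

lemma jm_nonneg3 (hJ : ∀ x, 0 ≤ J x) (u : Uu) (v : V) (z : Z) : 0 ≤ jmUVZ J u v z :=
  Finset.sum_nonneg fun _ _ => hJ _

lemma le_jmUZ (hJ : ∀ x, 0 ≤ J x) (u : Uu) (v : V) (z : Z) (w : Fin nw) :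
    J ((u,v,z),w) ≤ jmUZ J u z :=
  le_trans (le_jmUVZ hJ u v z w)
    (Finset.single_le_sum (f := fun v' => jmUVZ J u v' z)
      (fun v' _ => jm_nonneg3 hJ u v' z) (Finset.mem_univ v))

lemma le_jmVZ (hJ : ∀ x, 0 ≤ J x) (u : Uu) (v : V) (z : Z) (w : Fin nw) :
    J ((u,v,z),w) ≤ jmVZ J v z :=
  le_trans (le_jmUVZ hJ u v z w)
    (Finset.single_le_sum (f := fun u' => jmUVZ J u' v z)
      (fun u' _ => jm_nonneg3 hJ u' v z) (Finset.mem_univ u))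

lemma le_jmWZ (hJ : ∀ x, 0 ≤ J x) (u : Uu) (v : V) (z : Z) (w : Fin nw) :
    J ((u,v,z),w) ≤ jmWZ J w z := by
  refine le_trans (le_jmVWZ hJ u v z w) ?_
  have h : jmWZ J w z = ∑ v', jmVWZ J v' w z := Finset.sum_comm
  rw [h]
  exact Finset.single_le_sum (fun v' _ => jm_nonneg2 hJ v' z w) (Finset.mem_univ v)

lemma le_jmZ (hJ : ∀ x, 0 ≤ J x) (u : Uu) (v : V) (z : Z) (w : Fin nw) :
    J ((u,v,z),w) ≤ jmZ J z :=
  le_trans (le_jmUZ hJ u v z w)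
    (Finset.single_le_sum (f := fun u' => jmUZ J u' z)
      (fun u' _ => Finset.sum_nonneg fun _ _ => Finset.sum_nonneg fun _ _ => hJ _)
      (Finset.mem_univ u))

lemma le_jmU (hJ : ∀ x, 0 ≤ J x) (u : Uu) (v : V) (z : Z) (w : Fin nw) :
    J ((u,v,z),w) ≤ jmU J u :=
  le_trans (le_jmUVZ hJ u v z w) <| by
    unfold jmU
    calc jmUVZ J u v z ≤ ∑ v', jmUVZ J u v' z :=
      Finset.single_le_sum (fun v' _ => jm_nonneg3 hJ u v' z) (Finset.mem_univ v)
    _ ≤ ∑ z', ∑ v', ∑ w', J ((u,v',z'),w') :=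
      Finset.single_le_sum (f := fun z' => ∑ v', jmUVZ J u v' z')
        (fun z' _ => Finset.sum_nonneg fun _ _ => jm_nonneg3 hJ _ _ _) (Finset.mem_univ z)

end bounds

/- Markov characterisation -/
lemma markov_iff :
    MarkovZVUW J ↔ ∀ u v z w, J ((u,v,z),w) * jmU J u = jmUVZ J u v z * jmUW J u w := by
  unfold MarkovZVUW MarkovChain
  constructor
  · intro h u v z w
    have H := h (z,v) u w
    simp only [Fintype.sum_prod_type] at H
    exact H
  · intro h a b c
    obtain ⟨z,v⟩ := a
    simp only [Fintype.sum_prod_type]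
    exact h b v z c

/- under Markov: jmUWZ * jmU = jmUZ * jmUW -/
lemma markov_uwz (hM : ∀ u v z w, J ((u,v,z),w) * jmU J u = jmUVZ J u v z * jmUW J u w)
    (u : Uu) (z : Z) (w : Fin nw) :
    jmUWZ J u w z * jmU J u = jmUZ J u z * jmUW J u w := by
  unfold jmUWZ jmUZ
  rw [Finset.sum_mul, Finset.sum_mul]
  rw [show (∑ v, (∑ w', J ((u,v,z),w')) * jmUW J u w) = ∑ v, jmUVZ J u v z * jmUW J u w from rfl]
  exact Finset.sum_congr rfl fun v _ => hM u v z w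

/- key support identity -/
lemma markov_key (hJ : ∀ x, 0 ≤ J x)
    (hM : ∀ u v z w, J ((u,v,z),w) * jmU J u = jmUVZ J u v z * jmUW J u w)
    {u : Uu} {v : V} {z : Z} {w : Fin nw} (hx : 0 < J ((u,v,z),w)) :
    jmUWZ J u w z * jmUVZ J u v z = J ((u,v,z),w) * jmUZ J u z := by
  have hU : 0 < jmU J u := lt_of_lt_of_le hx (le_jmU hJ u v z w)
  have h1 := hM u v z w
  have h2 := markov_uwz J hM u z w
  have : (jmUWZ J u w z * jmUVZ J u v z) * jmU J u = (J ((u,v,z),w) * jmUZ J u z) * jmU J u := by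
    calc (jmUWZ J u w z * jmUVZ J u v z) * jmU J u
        = jmUVZ J u v z * (jmUWZ J u w z * jmU J u) := by ring
      _ = jmUVZ J u v z * (jmUZ J u z * jmUW J u w) := by rw [h2]
      _ = jmUZ J u z * (jmUVZ J u v z * jmUW J u w) := by ring
      _ = jmUZ J u z * (J ((u,v,z),w) * jmU J u) := by rw [← h1]
      _ = (J ((u,v,z),w) * jmUZ J u z) * jmU J u := by ring
  exact mul_right_cancel₀ (ne_of_gt hU) this

/- chain rule 1 -/
lemma chain1 (hJ : ∀ x, 0 ≤ J x) (hMk : MarkovZVUW J) :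
    miUW_Z J = miVW_Z J + miUW_VZ J := by
  have hM := (markov_iff J).1 hMk
  rw [rep_miUW_Z, rep_miVW_Z, rep_miUW_VZ, s14_sum4_add]
  refine s14_sum4_congr fun u v z w => ?_
  rcases eq_or_lt_of_le (hJ ((u,v,z),w)) with h0 | hx
  · rw [← h0]; ring
  · have hUWZ : 0 < jmUWZ J u w z := lt_of_lt_of_le hx (le_jmUWZ hJ u v z w)
    have hVWZ : 0 < jmVWZ J v w z := lt_of_lt_of_le hx (le_jmVWZ hJ u v z w)
    have hUVZ : 0 < jmUVZ J u v z := lt_of_lt_of_le hx (le_jmUVZ hJ u v z w)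
    have hUZ : 0 < jmUZ J u z := lt_of_lt_of_le hx (le_jmUZ hJ u v z w)
    have hVZ : 0 < jmVZ J v z := lt_of_lt_of_le hx (le_jmVZ hJ u v z w)
    have hWZ : 0 < jmWZ J w z := lt_of_lt_of_le hx (le_jmWZ hJ u v z w)
    have hZ : 0 < jmZ J z := lt_of_lt_of_le hx (le_jmZ hJ u v z w)
    have hkey := markov_key J hJ hM hx
    rw [← mul_add]
    congr 1
    have harg : jmUWZ J u w z * jmZ J z / (jmUZ J u z * jmWZ J w z)
        = (jmVWZ J v w z * jmZ J z / (jmVZ J v z * jmWZ J w z))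
          * (J ((u,v,z),w) * jmVZ J v z / (jmUVZ J u v z * jmVWZ J v w z)) := by
      rw [div_mul_div_comm, div_eq_div_iff (by positivity) (by positivity)]
      linear_combination (jmZ J z * jmVZ J v z * jmWZ J w z * jmVWZ J v w z) * hkey
    rw [harg, Real.logb_mul (by positivity) (by positivity)]

/- chain rule 2 -/
lemma chain2 (hJ : ∀ x, 0 ≤ J x) (P : Uu × V × Z → ℝ) (hmarg : ∀ x, (∑ w, J (x, w)) = P x) :
    entV_Z P = entV_WZ J + miVW_Z J := by
  rw [rep_entV_Z J P hmarg, rep_entV_WZ, rep_miVW_Z]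
  have : ∀ u v z w, J ((u,v,z),w) * Real.logb 2 (jmVWZ J v w z / jmWZ J w z)
      = J ((u,v,z),w) * Real.logb 2 (jmVZ J v z / jmZ J z)
        + J ((u,v,z),w) * Real.logb 2 (jmVWZ J v w z * jmZ J z / (jmVZ J v z * jmWZ J w z)) := by
    intro u v z w
    rcases eq_or_lt_of_le (hJ ((u,v,z),w)) with h0 | hx
    · rw [← h0]; ring
    · have hVWZ : 0 < jmVWZ J v w z := lt_of_lt_of_le hx (le_jmVWZ hJ u v z w)
      have hVZ : 0 < jmVZ J v z := lt_of_lt_of_le hx (le_jmVZ hJ u v z w)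
      have hWZ : 0 < jmWZ J w z := lt_of_lt_of_le hx (le_jmWZ hJ u v z w)
      have hZ : 0 < jmZ J z := lt_of_lt_of_le hx (le_jmZ hJ u v z w)
      rw [← mul_add]
      congr 1
      rw [Real.logb_div (ne_of_gt hVWZ) (ne_of_gt hWZ), Real.logb_div (ne_of_gt hVZ) (ne_of_gt hZ),
        Real.logb_div (by positivity) (by positivity),
        Real.logb_mul (ne_of_gt hVWZ) (ne_of_gt hZ), Real.logb_mul (ne_of_gt hVZ) (ne_of_gt hWZ)]
      ring
  have h2 : (∑ u, ∑ v, ∑ z, ∑ w, J ((u,v,z),w) * Real.logb 2 (jmVWZ J v w z / jmWZ J w z))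
      = (∑ u, ∑ v, ∑ z, ∑ w, J ((u,v,z),w) * Real.logb 2 (jmVZ J v z / jmZ J z))
        + ∑ u, ∑ v, ∑ z, ∑ w, J ((u,v,z),w)
            * Real.logb 2 (jmVWZ J v w z * jmZ J z / (jmVZ J v z * jmWZ J w z)) := by
    rw [s14_sum4_add]
    exact s14_sum4_congr this
  linarith [h2]

/- total sum -/
lemma sumJ_eq (hpmf : IsPMF J) :
    (∑ u, ∑ v, ∑ z, ∑ w, J ((u,v,z),w)) = 1 := by
  have h := hpmf.2
  simp only [Fintype.sum_prod_type] at h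
  exact h

/- nonnegativity of the two MIs -/
lemma miVW_Z_nonneg (hpmf : IsPMF J) : 0 ≤ miVW_Z J := by
  apply s14_condMI_nonneg
  · intro x; exact Finset.sum_nonneg fun u _ => hpmf.1 _
  · simp only [Fintype.sum_prod_type]
    rw [s14_P2 (fun u v z w => J ((u,v,z),w))]
    exact sumJ_eq J hpmf

lemma miUW_VZ_nonneg (hpmf : IsPMF J) : 0 ≤ miUW_VZ J := by
  apply s14_condMI_nonneg
  · intro x; exact hpmf.1 _
  · simp only [Fintype.sum_prod_type]
    rw [s14_P3 (fun u v z w => J ((u,v,z),w))]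
    exact sumJ_eq J hpmf

lemma entV_WZ_nonneg (hJ : ∀ x, 0 ≤ J x) : 0 ≤ entV_WZ J :=
  s14_condEntropy_nonneg _ fun x => Finset.sum_nonneg fun u _ => hJ _

end S14Chain


section S14TS

open Finset Real DHT

variable {Uu V Z : Type} [Fintype Uu] [Fintype V] [Fintype Z] {nw : ℕ}

/-- time sharing: with prob `p` use `W`, else a fresh constant symbol. -/
def jts (J : (Uu × V × Z) × Fin nw → ℝ) (p : ℝ) : (Uu × V × Z) × Fin (nw+1) → ℝ :=
  fun y => if h : (y.2 : ℕ) < nw then p * J (y.1, ⟨(y.2 : ℕ), h⟩) else (1 - p) * ∑ w, J (y.1, w)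

variable (J : (Uu × V × Z) × Fin nw → ℝ) (p : ℝ)

lemma jts_cast (x : Uu × V × Z) (w : Fin nw) : jts J p (x, Fin.castSucc w) = p * J (x, w) := by
  unfold jts
  rw [dif_pos (by simpa using w.isLt)]
  congr 1

lemma jts_last (x : Uu × V × Z) : jts J p (x, Fin.last nw) = (1-p) * ∑ w, J (x,w) := by
  unfold jts
  rw [dif_neg (by simp)]

lemma jts_sum (x : Uu × V × Z) : ∑ w' : Fin (nw+1), jts J p (x, w') = ∑ w, J (x, w) := by
  rw [Fin.sum_univ_castSucc]
  simp only [jts_cast, jts_last]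
  rw [← Finset.mul_sum]; ring

/- unchanged marginals -/
lemma jmZ_jts (z : Z) : jmZ (jts J p) z = jmZ J z :=
  Finset.sum_congr rfl fun u _ => Finset.sum_congr rfl fun v _ => jts_sum J p ((u,v,z))

lemma jmUZ_jts (u : Uu) (z : Z) : jmUZ (jts J p) u z = jmUZ J u z :=
  Finset.sum_congr rfl fun v _ => jts_sum J p ((u,v,z))

lemma jmVZ_jts (v : V) (z : Z) : jmVZ (jts J p) v z = jmVZ J v z :=
  Finset.sum_congr rfl fun u _ => jts_sum J p ((u,v,z))

lemma jmU_jts (u : Uu) : jmU (jts J p) u = jmU J u :=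
  Finset.sum_congr rfl fun z _ => Finset.sum_congr rfl fun v _ => jts_sum J p ((u,v,z))

lemma jmUVZ_jts (u : Uu) (v : V) (z : Z) : jmUVZ (jts J p) u v z = jmUVZ J u v z :=
  jts_sum J p ((u,v,z))

/- castSucc marginals -/
lemma jmUWZ_jts_cast (u : Uu) (w : Fin nw) (z : Z) :
    jmUWZ (jts J p) u (Fin.castSucc w) z = p * jmUWZ J u w z := by
  unfold jmUWZ
  rw [Finset.mul_sum]
  exact Finset.sum_congr rfl fun v _ => jts_cast J p ((u,v,z)) w

lemma jmVWZ_jts_cast (v : V) (w : Fin nw) (z : Z) :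
    jmVWZ (jts J p) v (Fin.castSucc w) z = p * jmVWZ J v w z := by
  unfold jmVWZ
  rw [Finset.mul_sum]
  exact Finset.sum_congr rfl fun u _ => jts_cast J p ((u,v,z)) w

lemma jmWZ_jts_cast (w : Fin nw) (z : Z) :
    jmWZ (jts J p) (Fin.castSucc w) z = p * jmWZ J w z := by
  unfold jmWZ
  rw [Finset.mul_sum]
  refine Finset.sum_congr rfl fun u _ => ?_
  rw [Finset.mul_sum]
  exact Finset.sum_congr rfl fun v _ => jts_cast J p ((u,v,z)) w

lemma jmUW_jts_cast (u : Uu) (w : Fin nw) :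
    jmUW (jts J p) u (Fin.castSucc w) = p * jmUW J u w := by
  unfold jmUW
  rw [Finset.mul_sum]
  refine Finset.sum_congr rfl fun z _ => ?_
  rw [Finset.mul_sum]
  exact Finset.sum_congr rfl fun v _ => jts_cast J p ((u,v,z)) w

/- last marginals -/
lemma jmUWZ_jts_last (u : Uu) (z : Z) :
    jmUWZ (jts J p) u (Fin.last nw) z = (1-p) * jmUZ J u z := by
  unfold jmUWZ jmUZ
  rw [Finset.mul_sum]
  exact Finset.sum_congr rfl fun v _ => jts_last J p ((u,v,z))

lemma jmVWZ_jts_last (v : V) (z : Z) :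
    jmVWZ (jts J p) v (Fin.last nw) z = (1-p) * jmVZ J v z := by
  unfold jmVWZ jmVZ
  rw [Finset.mul_sum]
  exact Finset.sum_congr rfl fun u _ => jts_last J p ((u,v,z))

lemma jmWZ_jts_last (z : Z) :
    jmWZ (jts J p) (Fin.last nw) z = (1-p) * jmZ J z := by
  unfold jmWZ jmZ
  rw [Finset.mul_sum]
  refine Finset.sum_congr rfl fun u _ => ?_
  rw [Finset.mul_sum]
  exact Finset.sum_congr rfl fun v _ => jts_last J p ((u,v,z))

lemma jmUW_jts_last (u : Uu) :
    jmUW (jts J p) u (Fin.last nw) = (1-p) * jmU J u := by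
  unfold jmUW jmU
  rw [Finset.mul_sum]
  refine Finset.sum_congr rfl fun z _ => ?_
  rw [Finset.mul_sum]
  exact Finset.sum_congr rfl fun v _ => jts_last J p ((u,v,z))

lemma jts_nonneg (hJ : ∀ x, 0 ≤ J x) (hp0 : 0 ≤ p) (hp1 : p ≤ 1) : ∀ y, 0 ≤ jts J p y := by
  intro y
  unfold jts
  split
  · exact mul_nonneg hp0 (hJ _)
  · exact mul_nonneg (by linarith) (Finset.sum_nonneg fun w _ => hJ _)

lemma jts_pmf (hpmf : IsPMF J) (hp0 : 0 ≤ p) (hp1 : p ≤ 1) : IsPMF (jts J p) := by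
  constructor
  · exact jts_nonneg J p hpmf.1 hp0 hp1
  · rw [Fintype.sum_prod_type]
    have h2 := hpmf.2
    rw [Fintype.sum_prod_type] at h2
    rw [← h2]
    exact Finset.sum_congr rfl fun x _ => jts_sum J p x

lemma jts_marg (P : Uu × V × Z → ℝ) (hmarg : ∀ x, (∑ w, J (x, w)) = P x) :
    ∀ x, (∑ w', jts J p (x, w')) = P x :=
  fun x => (jts_sum J p x).trans (hmarg x)

lemma jts_markov (hMk : MarkovZVUW J) : MarkovZVUW (jts J p) := by
  rw [markov_iff] at hMk ⊢
  intro u v z w'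
  refine Fin.lastCases ?_ ?_ w'
  · rw [jts_last, jmU_jts, jmUVZ_jts, jmUW_jts_last]
    show (1-p) * jmUVZ J u v z * jmU J u = jmUVZ J u v z * ((1-p) * jmU J u)
    ring
  · intro w
    rw [jts_cast, jmU_jts, jmUVZ_jts, jmUW_jts_cast]
    linear_combination p * hMk u v z w

lemma jmUVZ_le_jmUZ (hJ : ∀ x, 0 ≤ J x) (u : Uu) (v : V) (z : Z) :
    jmUVZ J u v z ≤ jmUZ J u z :=
  Finset.single_le_sum (f := fun v' => jmUVZ J u v' z)
    (fun v' _ => jm_nonneg3 hJ u v' z) (Finset.mem_univ v)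

lemma jmUZ_le_jmZ (hJ : ∀ x, 0 ≤ J x) (u : Uu) (z : Z) :
    jmUZ J u z ≤ jmZ J z :=
  Finset.single_le_sum (f := fun u' => jmUZ J u' z)
    (fun u' _ => Finset.sum_nonneg fun _ _ => Finset.sum_nonneg fun _ _ => hJ _)
    (Finset.mem_univ u)

lemma jmUVZ_le_jmVZ (hJ : ∀ x, 0 ≤ J x) (u : Uu) (v : V) (z : Z) :
    jmUVZ J u v z ≤ jmVZ J v z :=
  Finset.single_le_sum (f := fun u' => jmUVZ J u' v z)
    (fun u' _ => jm_nonneg3 hJ u' v z) (Finset.mem_univ u)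

lemma ts_miUW_Z (hJ : ∀ x, 0 ≤ J x) : miUW_Z (jts J p) = p * miUW_Z J := by
  rw [rep_miUW_Z (jts J p), rep_miUW_Z J]
  have main : ∀ u v z,
      (∑ w' : Fin (nw+1), jts J p ((u,v,z),w') * Real.logb 2
        (jmUWZ (jts J p) u w' z * jmZ (jts J p) z / (jmUZ (jts J p) u z * jmWZ (jts J p) w' z)))
      = ∑ w, p * (J ((u,v,z),w) * Real.logb 2
          (jmUWZ J u w z * jmZ J z / (jmUZ J u z * jmWZ J w z))) := by
    intro u v z
    rw [Fin.sum_univ_castSucc]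
    have hlast : jts J p ((u,v,z), Fin.last nw) * Real.logb 2
        (jmUWZ (jts J p) u (Fin.last nw) z * jmZ (jts J p) z /
          (jmUZ (jts J p) u z * jmWZ (jts J p) (Fin.last nw) z)) = 0 := by
      rw [jts_last, jmUWZ_jts_last, jmWZ_jts_last, jmUZ_jts, jmZ_jts]
      rcases eq_or_lt_of_le (jm_nonneg3 hJ u v z) with h0 | h0
      · rw [show (∑ w, J ((u,v,z),w)) = jmUVZ J u v z from rfl, ← h0]
        ring
      · rcases eq_or_ne (1-p) 0 with hp' | hp'
        · rw [hp']; ring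
        · have hUZ : 0 < jmUZ J u z := lt_of_lt_of_le h0 (jmUVZ_le_jmUZ J hJ u v z)
          have hZ : 0 < jmZ J z := lt_of_lt_of_le hUZ (jmUZ_le_jmZ J hJ u z)
          rw [show (1-p) * jmUZ J u z * jmZ J z / (jmUZ J u z * ((1-p) * jmZ J z)) = 1 from
            (div_eq_one_iff_eq (mul_ne_zero (ne_of_gt hUZ)
              (mul_ne_zero hp' (ne_of_gt hZ)))).2 (by ring)]
          rw [Real.logb_one, mul_zero]
    rw [hlast, add_zero]
    refine Finset.sum_congr rfl fun w _ => ?_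
    rw [jts_cast, jmUWZ_jts_cast, jmWZ_jts_cast, jmUZ_jts, jmZ_jts]
    rcases eq_or_ne p 0 with hp' | hp'
    · rw [hp']; ring
    · rcases eq_or_lt_of_le (hJ ((u,v,z),w)) with h0 | h0
      · rw [← h0]; ring
      · rw [show p * jmUWZ J u w z * jmZ J z / (jmUZ J u z * (p * jmWZ J w z))
            = jmUWZ J u w z * jmZ J z / (jmUZ J u z * jmWZ J w z) from by
          rcases eq_or_ne (jmUZ J u z * jmWZ J w z) 0 with hd | hd
          · rcases mul_eq_zero.1 hd with h | h <;> rw [h] <;> simp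
          · rcases mul_ne_zero_iff.1 hd with ⟨h1, h2⟩
            field_simp]
        ring
  calc (∑ u, ∑ v, ∑ z, ∑ w' : Fin (nw+1), jts J p ((u,v,z),w') * Real.logb 2
        (jmUWZ (jts J p) u w' z * jmZ (jts J p) z / (jmUZ (jts J p) u z * jmWZ (jts J p) w' z)))
      = ∑ u, ∑ v, ∑ z, ∑ w, p * (J ((u,v,z),w) * Real.logb 2
          (jmUWZ J u w z * jmZ J z / (jmUZ J u z * jmWZ J w z))) :=
        Finset.sum_congr rfl fun u _ => Finset.sum_congr rfl fun v _ =>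
          Finset.sum_congr rfl fun z _ => main u v z
    _ = p * ∑ u, ∑ v, ∑ z, ∑ w, J ((u,v,z),w) * Real.logb 2
          (jmUWZ J u w z * jmZ J z / (jmUZ J u z * jmWZ J w z)) := by
        simp only [Finset.mul_sum]

lemma ts_entV_WZ (hJ : ∀ x, 0 ≤ J x) (P : Uu × V × Z → ℝ)
    (hmarg : ∀ x, (∑ w, J (x, w)) = P x) :
    entV_WZ (jts J p) = p * entV_WZ J + (1-p) * entV_Z P := by
  rw [rep_entV_WZ (jts J p), rep_entV_WZ J, rep_entV_Z J P hmarg]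
  have main : ∀ u v z,
      (∑ w' : Fin (nw+1), jts J p ((u,v,z),w') * Real.logb 2
        (jmVWZ (jts J p) v w' z / jmWZ (jts J p) w' z))
      = (∑ w, p * (J ((u,v,z),w) * Real.logb 2 (jmVWZ J v w z / jmWZ J w z)))
        + (1-p) * ∑ w, J ((u,v,z),w) * Real.logb 2 (jmVZ J v z / jmZ J z) := by
    intro u v z
    rw [Fin.sum_univ_castSucc]
    congr 1
    · refine Finset.sum_congr rfl fun w _ => ?_
      rw [jts_cast, jmVWZ_jts_cast, jmWZ_jts_cast]
      rcases eq_or_ne p 0 with hp' | hp'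
      · rw [hp']; ring
      · rw [mul_div_mul_left _ _ hp']; ring
    · rw [jts_last, jmVWZ_jts_last, jmWZ_jts_last]
      rcases eq_or_ne (1-p) 0 with hp' | hp'
      · rw [hp']; ring
      · rw [mul_div_mul_left _ _ hp', mul_assoc, Finset.sum_mul]
  have key : (∑ u, ∑ v, ∑ z, ∑ w' : Fin (nw+1), jts J p ((u,v,z),w') * Real.logb 2
        (jmVWZ (jts J p) v w' z / jmWZ (jts J p) w' z))
      = p * (∑ u, ∑ v, ∑ z, ∑ w, J ((u,v,z),w) * Real.logb 2 (jmVWZ J v w z / jmWZ J w z))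
        + (1-p) * (∑ u, ∑ v, ∑ z, ∑ w, J ((u,v,z),w) * Real.logb 2 (jmVZ J v z / jmZ J z)) := by
    calc (∑ u, ∑ v, ∑ z, ∑ w' : Fin (nw+1), jts J p ((u,v,z),w') * Real.logb 2
        (jmVWZ (jts J p) v w' z / jmWZ (jts J p) w' z))
        = ∑ u, ∑ v, ∑ z,
            ((∑ w, p * (J ((u,v,z),w) * Real.logb 2 (jmVWZ J v w z / jmWZ J w z)))
            + (1-p) * ∑ w, J ((u,v,z),w) * Real.logb 2 (jmVZ J v z / jmZ J z)) :=
          Finset.sum_congr rfl fun u _ => Finset.sum_congr rfl fun v _ =>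
            Finset.sum_congr rfl fun z _ => main u v z
      _ = _ := by
          simp only [Finset.sum_add_distrib]
          simp only [← Finset.mul_sum]
  rw [key]
  ring

end S14TS


section S14Const

open Finset Real DHT

variable {Uu V Z : Type} [Fintype Uu] [Fintype V] [Fintype Z]

/-- trivial (constant) auxiliary variable -/
def jconst (P : Uu × V × Z → ℝ) : (Uu × V × Z) × Fin 1 → ℝ := fun y => P y.1

variable (P : Uu × V × Z → ℝ)

lemma jconst_marg : ∀ x, (∑ w : Fin 1, jconst P (x, w)) = P x := by
  intro x; simp [jconst]

lemma jconst_pmf (hP : IsPMF P) : IsPMF (jconst P) := by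
  constructor
  · intro y; exact hP.1 y.1
  · rw [Fintype.sum_prod_type]
    calc ∑ x, ∑ w : Fin 1, jconst P (x,w) = ∑ x, P x :=
          Finset.sum_congr rfl fun x _ => jconst_marg P x
      _ = 1 := hP.2

lemma jconst_markov : MarkovZVUW (jconst P) := by
  rw [markov_iff]
  intro u v z w
  simp only [jmU, jmUVZ, jmUW, jconst]
  simp

lemma jconst_miUW_VZ (hP : IsPMF P) : miUW_VZ (jconst P) = 0 := by
  rw [rep_miUW_VZ]
  refine Finset.sum_eq_zero fun u _ => Finset.sum_eq_zero fun v _ =>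
    Finset.sum_eq_zero fun z _ => Finset.sum_eq_zero fun w _ => ?_
  rcases eq_or_lt_of_le (hP.1 (u,v,z)) with h0 | h0
  · rw [show jconst P ((u,v,z),w) = P (u,v,z) from rfl, ← h0, zero_mul]
  · have hJx : jconst P ((u,v,z),w) = P (u,v,z) := rfl
    have hUVZ : jmUVZ (jconst P) u v z = P (u,v,z) := by simp [jmUVZ, jconst]
    have hVWZ : jmVWZ (jconst P) v w z = ∑ u', P (u',v,z) := by simp [jmVWZ, jconst]
    have hVZ : jmVZ (jconst P) v z = ∑ u', P (u',v,z) := by simp [jmVZ, jconst]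
    have hpos : 0 < ∑ u', P (u',v,z) :=
      lt_of_lt_of_le h0 (Finset.single_le_sum (fun u' _ => hP.1 (u',v,z)) (Finset.mem_univ u))
    rw [hJx, hUVZ, hVWZ, hVZ,
      show P (u,v,z) * (∑ u', P (u',v,z)) / (P (u,v,z) * (∑ u', P (u',v,z))) = 1 from
        div_self (by positivity),
      Real.logb_one, mul_zero]

lemma jconst_miUW_Z (hP : IsPMF P) : miUW_Z (jconst P) = 0 := by
  rw [rep_miUW_Z]
  refine Finset.sum_eq_zero fun u _ => Finset.sum_eq_zero fun v _ =>
    Finset.sum_eq_zero fun z _ => Finset.sum_eq_zero fun w _ => ?_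
  rcases eq_or_lt_of_le (hP.1 (u,v,z)) with h0 | h0
  · rw [show jconst P ((u,v,z),w) = P (u,v,z) from rfl, ← h0, zero_mul]
  · have hUWZ : jmUWZ (jconst P) u w z = ∑ v', P (u,v',z) := by simp [jmUWZ, jconst]
    have hUZ : jmUZ (jconst P) u z = ∑ v', P (u,v',z) := by simp [jmUZ, jconst]
    have hZ : jmZ (jconst P) z = ∑ u', ∑ v', P (u',v',z) := by simp [jmZ, jconst]
    have hWZ : jmWZ (jconst P) w z = ∑ u', ∑ v', P (u',v',z) := by simp [jmWZ, jconst]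
    have hpos1 : 0 < ∑ v', P (u,v',z) :=
      lt_of_lt_of_le h0 (Finset.single_le_sum (fun v' _ => hP.1 (u,v',z)) (Finset.mem_univ v))
    have hpos2 : 0 < ∑ u', ∑ v', P (u',v',z) :=
      lt_of_lt_of_le hpos1 (Finset.single_le_sum
        (f := fun u' => ∑ v', P (u',v',z))
        (fun u' _ => Finset.sum_nonneg fun v' _ => hP.1 (u',v',z)) (Finset.mem_univ u))
    rw [hUWZ, hUZ, hZ, hWZ,
      show (∑ v', P (u,v',z)) * (∑ u', ∑ v', P (u',v',z))
          / ((∑ v', P (u,v',z)) * (∑ u', ∑ v', P (u',v',z))) = 1 from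
        div_self (by positivity),
      Real.logb_one, mul_zero]

end S14Const


theorem statement_14' {Uu V Z : Type} [Fintype Uu] [Fintype V] [Fintype Z]
    (P : Uu × V × Z → ℝ) (hP : IsPMF P) (c : ℝ) (hc : 0 ≤ c) :
    sInf {r | ∃ (nw : ℕ) (J : (Uu × V × Z) × Fin nw → ℝ),
      IsPMF J ∧ (∀ x, (∑ w, J (x, w)) = P x) ∧ MarkovZVUW J ∧ miUW_VZ J ≤ c ∧
      r = max (entV_WZ J) (entV_WZ J + miUW_Z J - c)} =
    sInf {r | ∃ (nw : ℕ) (J : (Uu × V × Z) × Fin nw → ℝ),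
      IsPMF J ∧ (∀ x, (∑ w, J (x, w)) = P x) ∧ MarkovZVUW J ∧ miUW_Z J ≤ c ∧
      r = entV_WZ J} := by
  classical
  have hbddR : BddBelow {r | ∃ (nw : ℕ) (J : (Uu × V × Z) × Fin nw → ℝ),
      IsPMF J ∧ (∀ x, (∑ w, J (x, w)) = P x) ∧ MarkovZVUW J ∧ miUW_Z J ≤ c ∧
      r = entV_WZ J} := by
    refine ⟨0, fun r hr => ?_⟩
    obtain ⟨nw, J, hpmf, -, -, -, rfl⟩ := hr
    exact entV_WZ_nonneg J hpmf.1
  have hbddL : BddBelow {r | ∃ (nw : ℕ) (J : (Uu × V × Z) × Fin nw → ℝ),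
      IsPMF J ∧ (∀ x, (∑ w, J (x, w)) = P x) ∧ MarkovZVUW J ∧ miUW_VZ J ≤ c ∧
      r = max (entV_WZ J) (entV_WZ J + miUW_Z J - c)} := by
    refine ⟨0, fun r hr => ?_⟩
    obtain ⟨nw, J, hpmf, -, -, -, rfl⟩ := hr
    exact le_trans (entV_WZ_nonneg J hpmf.1) (le_max_left _ _)
  have hmemR0 : entV_WZ (jconst P) ∈ {r | ∃ (nw : ℕ) (J : (Uu × V × Z) × Fin nw → ℝ),
      IsPMF J ∧ (∀ x, (∑ w, J (x, w)) = P x) ∧ MarkovZVUW J ∧ miUW_Z J ≤ c ∧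
      r = entV_WZ J} :=
    ⟨1, jconst P, jconst_pmf P hP, jconst_marg P, jconst_markov P,
      by rw [jconst_miUW_Z P hP]; exact hc, rfl⟩
  have hmemL0 : max (entV_WZ (jconst P)) (entV_WZ (jconst P) + miUW_Z (jconst P) - c)
      ∈ {r | ∃ (nw : ℕ) (J : (Uu × V × Z) × Fin nw → ℝ),
      IsPMF J ∧ (∀ x, (∑ w, J (x, w)) = P x) ∧ MarkovZVUW J ∧ miUW_VZ J ≤ c ∧
      r = max (entV_WZ J) (entV_WZ J + miUW_Z J - c)} :=
    ⟨1, jconst P, jconst_pmf P hP, jconst_marg P, jconst_markov P,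
      by rw [jconst_miUW_VZ P hP]; exact hc, rfl⟩
  apply le_antisymm
  · refine csInf_le_csInf hbddL ⟨_, hmemR0⟩ ?_
    rintro r ⟨nw, J, hpmf, hmarg, hMk, hI, rfl⟩
    have hch := chain1 J hpmf.1 hMk
    have hv := miVW_Z_nonneg J hpmf
    exact ⟨nw, J, hpmf, hmarg, hMk, by linarith,
      (max_eq_left (by linarith)).symm⟩
  · refine le_csInf ⟨_, hmemL0⟩ ?_
    rintro r ⟨nw, J, hpmf, hmarg, hMk, hIuvz, rfl⟩
    have hch := chain1 J hpmf.1 hMk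
    have hv := miVW_Z_nonneg J hpmf
    have hu := miUW_VZ_nonneg J hpmf
    rcases le_or_gt (miUW_Z J) c with hIc | hIc
    · exact le_trans (csInf_le hbddR ⟨nw, J, hpmf, hmarg, hMk, hIc, rfl⟩) (le_max_left _ _)
    · have hI0 : 0 < miUW_Z J := lt_of_le_of_lt hc hIc
      set p := c / miUW_Z J with hp
      have hp0 : 0 ≤ p := div_nonneg hc (le_of_lt hI0)
      have hp1 : p ≤ 1 := (div_le_one hI0).2 (le_of_lt hIc)
      have hmem : entV_WZ (jts J p) ∈ {r | ∃ (nw : ℕ) (J : (Uu × V × Z) × Fin nw → ℝ),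
          IsPMF J ∧ (∀ x, (∑ w, J (x, w)) = P x) ∧ MarkovZVUW J ∧ miUW_Z J ≤ c ∧
          r = entV_WZ J} :=
        ⟨nw+1, jts J p, jts_pmf J p hpmf hp0 hp1, jts_marg J p P hmarg, jts_markov J p hMk,
          le_of_eq (by rw [ts_miUW_Z J p hpmf.1, hp, div_mul_cancel₀ c (ne_of_gt hI0)]), rfl⟩
      refine le_trans (csInf_le hbddR hmem) (le_trans ?_ (le_max_right _ _))
      rw [ts_entV_WZ J p hpmf.1 P hmarg, chain2 J hpmf.1 P hmarg]
      have h1 : (1-p) * miVW_Z J ≤ (1-p) * miUW_Z J :=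
        mul_le_mul_of_nonneg_left (by linarith) (by linarith)
      have h2 : (1-p) * miUW_Z J = miUW_Z J - c := by
        rw [hp, sub_mul, one_mul, div_mul_cancel₀ c (ne_of_gt hI0)]
      have hexp : p * entV_WZ J + (1-p) * (entV_WZ J + miVW_Z J)
          = entV_WZ J + (1-p) * miVW_Z J := by ring
      linarith


/-- For a joint pmf `P_{UVZ}` and `c ≥ 0`, the infimum over auxiliary `W`
with `(Z,V) − U − W` and `I(U;W|V,Z) ≤ c` of
`max{H(V|W,Z), H(V|W,Z) + I(U;W|Z) − c}` equals the infimum over auxiliary `W` with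
`(Z,V) − U − W` and `I(U;W|Z) ≤ c` of `H(V|W,Z)`. -/
theorem statement_14 {Uu V Z : Type} [Fintype Uu] [Fintype V] [Fintype Z]
    (P : Uu × V × Z → ℝ) (hP : IsPMF P) (c : ℝ) (hc : 0 ≤ c) :
    sInf {r | ∃ (nw : ℕ) (J : (Uu × V × Z) × Fin nw → ℝ),
      IsPMF J ∧ (∀ x, (∑ w, J (x, w)) = P x) ∧ MarkovZVUW J ∧ miUW_VZ J ≤ c ∧
      r = max (entV_WZ J) (entV_WZ J + miUW_Z J - c)} =
    sInf {r | ∃ (nw : ℕ) (J : (Uu × V × Z) × Fin nw → ℝ),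
      IsPMF J ∧ (∀ x, (∑ w, J (x, w)) = P x) ∧ MarkovZVUW J ∧ miUW_Z J ≤ c ∧
      r = entV_WZ J} :=
  statement_14' P hP c hc
end
end
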